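/- arXiv:0711.1680 — 12 statements merged into one kernel-verified Lean document; each statement's English description precedes it below -/
import Mathlib

section
/- If W₁ and W₂ are n×n matrices and every column of W₁ contains at most one nonzero entry, then (W₁W₂)^{∨2} = W₁^{∨2} · W₂^{∨2}. -/
open Matrix BigOperators Filter

/-- Index set of pairs `(i,j)` with `i < j`. -/
abbrev Pairs (n : ℕ) := {p : Fin n × Fin n // p.1 < p.2}

/-- Zeon second power: matrix of 2×2 permanents. -/
def zeonSq {n : ℕ} {R : Type*} [CommRing R] (A : Matrix (Fin n) (Fin n) R) :
    Matrix (Pairs n) (Pairs n) R :=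
  Matrix.of fun I J =>
    A I.1.1 J.1.1 * A I.1.2 J.1.2 + A I.1.1 J.1.2 * A I.1.2 J.1.1

/-- `Mat(X)`: symmetric matrix with zero diagonal built from a vector indexed by pairs. -/
def matOf {n : ℕ} {R : Type*} [CommRing R] (X : Pairs n → R) :
    Matrix (Fin n) (Fin n) R :=
  Matrix.of fun i j =>
    if h : i < j then X ⟨(i, j), h⟩ else if h' : j < i then X ⟨(j, i), h'⟩ else 0

theorem stmt1 {n : ℕ} (W₁ W₂ : Matrix (Fin n) (Fin n) ℚ)
    (hcol : ∀ j i i', W₁ i j ≠ 0 → W₁ i' j ≠ 0 → i = i') :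
    zeonSq (W₁ * W₂) = zeonSq W₁ * zeonSq W₂ := by
  ext I J
  obtain ⟨⟨i, j⟩, hij⟩ := I
  obtain ⟨⟨a, b⟩, hab⟩ := J
  have hz : ∀ k, W₁ i k * W₁ j k = 0 := by
    intro k
    by_contra h
    exact absurd (hcol k i j (left_ne_zero_of_mul h) (right_ne_zero_of_mul h)) (ne_of_lt hij)
  simp only [zeonSq, Matrix.mul_apply, Matrix.of_apply]
  set f : Fin n × Fin n → ℚ := fun p =>
    W₁ i p.1 * W₁ j p.2 * (W₂ p.1 a * W₂ p.2 b + W₂ p.1 b * W₂ p.2 a) with hf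
  have h1 : (∑ k, W₁ i k * W₂ k a) * (∑ l, W₁ j l * W₂ l b) +
      (∑ k, W₁ i k * W₂ k b) * (∑ l, W₁ j l * W₂ l a) = ∑ p : Fin n × Fin n, f p := by
    rw [Finset.sum_mul_sum, Finset.sum_mul_sum, ← Finset.sum_add_distrib,
      Fintype.sum_prod_type]
    refine Finset.sum_congr rfl fun k _ => ?_
    rw [← Finset.sum_add_distrib]
    refine Finset.sum_congr rfl fun l _ => ?_
    simp only [hf]; ring
  have hdiag : ∀ p : Fin n × Fin n, p.1 = p.2 → f p = 0 := by
    intro p hp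
    simp only [hf, ← hp]
    rw [hz p.1]
    ring
  have h2 : ∑ p : Fin n × Fin n, f p =
      ∑ p ∈ Finset.univ.filter (fun p : Fin n × Fin n => p.1 < p.2), (f p + f p.swap) := by
    rw [Finset.sum_add_distrib]
    have hswap : ∑ p ∈ Finset.univ.filter (fun p : Fin n × Fin n => p.1 < p.2), f p.swap =
        ∑ p ∈ Finset.univ.filter (fun p : Fin n × Fin n => p.2 < p.1), f p := by
      apply Finset.sum_nbij' (fun p => p.swap) (fun p => p.swap) <;>
        simp [Finset.mem_filter]
    rw [hswap]
    rw [← Finset.sum_filter_add_sum_filter_not Finset.univ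
      (fun p : Fin n × Fin n => p.1 < p.2) f]
    congr 1
    rw [← Finset.sum_filter_add_sum_filter_not
      (Finset.univ.filter (fun p : Fin n × Fin n => ¬ p.1 < p.2))
      (fun p : Fin n × Fin n => p.2 < p.1) f, Finset.filter_filter, Finset.filter_filter]
    have e1 : (Finset.univ.filter fun p : Fin n × Fin n => ¬ p.1 < p.2 ∧ p.2 < p.1) =
        Finset.univ.filter fun p : Fin n × Fin n => p.2 < p.1 := by
      apply Finset.filter_congr; intro p _
      constructor
      · exact fun h => h.2
      · exact fun h => ⟨asymm h, h⟩
    have e2 : ∑ p ∈ Finset.univ.filter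
        (fun p : Fin n × Fin n => ¬ p.1 < p.2 ∧ ¬ p.2 < p.1), f p = 0 := by
      apply Finset.sum_eq_zero
      intro p hp
      simp only [Finset.mem_filter] at hp
      exact hdiag p (le_antisymm (not_lt.mp hp.2.2) (not_lt.mp hp.2.1))
    rw [e1, e2, add_zero]
  have h3 : ∑ p ∈ Finset.univ.filter (fun p : Fin n × Fin n => p.1 < p.2),
      (W₁ i p.1 * W₁ j p.2 + W₁ i p.2 * W₁ j p.1) *
        (W₂ p.1 a * W₂ p.2 b + W₂ p.1 b * W₂ p.2 a) =
      ∑ p ∈ Finset.univ.filter (fun p : Fin n × Fin n => p.1 < p.2), (f p + f p.swap) := by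
    refine Finset.sum_congr rfl fun p _ => ?_
    simp only [hf, Prod.fst_swap, Prod.snd_swap]
    ring
  rw [h1, h2, ← h3]
  exact Finset.sum_subtype (p := fun p : Fin n × Fin n => p.1 < p.2)
    (Finset.univ.filter fun p : Fin n × Fin n => p.1 < p.2)
    (fun x => by simp) fun p : Fin n × Fin n =>
    (W₁ i p.1 * W₁ j p.2 + W₁ i p.2 * W₁ j p.1) *
      (W₂ p.1 a * W₂ p.2 b + W₂ p.1 b * W₂ p.2 a)
end

section
/- For any n×n matrix A and any vector X ∈ ℚ^{C(n,2)}, the matrix Mat(X·A^{∨2}) equals AᵀX̂A − D⁺, where D⁺ is the diagonal matrix with entries D⁺_{ii} = (AᵀX̂A)_{ii}; in particular tr D⁺ = tr(AᵀX̂A). Moreover, if A and X have nonnegative entries, then D⁺ has nonnegative entries. -/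
open Matrix BigOperators Filter

lemma key {n : ℕ} (A : Matrix (Fin n) (Fin n) ℚ) (X : Pairs n → ℚ) (i j : Fin n) :
    (Aᵀ * matOf X * A) i j
      = ∑ I : Pairs n, X I * (A I.1.1 i * A I.1.2 j + A I.1.1 j * A I.1.2 i) := by
  have hLHS : (Aᵀ * matOf X * A) i j
      = ∑ p : Fin n × Fin n, A p.1 i * matOf X p.1 p.2 * A p.2 j := by
    simp only [Matrix.mul_apply, Finset.sum_mul, Fintype.sum_prod_type, transpose_apply]
    rw [Finset.sum_comm]
  rw [hLHS]
  rw [← Finset.sum_filter_add_sum_filter_not Finset.univ (fun p : Fin n × Fin n => p.1 < p.2)]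
  have h2 : ∑ p ∈ Finset.univ.filter (fun p : Fin n × Fin n => ¬ p.1 < p.2),
      A p.1 i * matOf X p.1 p.2 * A p.2 j
      = ∑ p ∈ Finset.univ.filter (fun p : Fin n × Fin n => p.1 < p.2),
      A p.2 i * matOf X p.1 p.2 * A p.1 j := by
    rw [← Finset.sum_filter_add_sum_filter_not (Finset.univ.filter (fun p : Fin n × Fin n => ¬ p.1 < p.2)) (fun p => p.2 < p.1)]
    have hz : ∑ p ∈ (Finset.univ.filter (fun p : Fin n × Fin n => ¬ p.1 < p.2)).filter (fun p => ¬ p.2 < p.1),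
        A p.1 i * matOf X p.1 p.2 * A p.2 j = 0 := by
      apply Finset.sum_eq_zero
      intro p hp
      simp only [Finset.mem_filter] at hp
      simp [matOf, hp.1.2, hp.2]
    rw [hz, add_zero]
    refine Finset.sum_nbij' Prod.swap Prod.swap ?_ ?_ ?_ ?_ ?_
    · intro p hp
      simp only [Finset.mem_filter, Finset.mem_univ, true_and, Prod.fst_swap, Prod.snd_swap] at hp ⊢
      exact hp.2
    · intro p hp
      simp only [Finset.mem_filter, Finset.mem_univ, true_and, Prod.fst_swap, Prod.snd_swap] at hp ⊢
      exact ⟨not_lt_of_gt hp, hp⟩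
    · intros; simp
    · intros; simp
    · intro p hp
      simp only [Finset.mem_filter, Finset.mem_univ, true_and] at hp
      simp only [Prod.fst_swap, Prod.snd_swap, matOf, Matrix.of_apply]
      rw [dif_neg hp.1, dif_pos hp.2, dif_pos hp.2]
  rw [h2, ← Finset.sum_add_distrib]
  rw [Finset.sum_subtype (Finset.univ.filter (fun p : Fin n × Fin n => p.1 < p.2))
    (p := fun p : Fin n × Fin n => p.1 < p.2) (by intro p; simp)]
  apply Finset.sum_congr rfl
  intro I _
  have hm : matOf X I.1.1 I.1.2 = X I := by simp [matOf, I.2]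
  rw [hm]; ring

theorem stmt4 {n : ℕ} (A : Matrix (Fin n) (Fin n) ℚ) (X : Pairs n → ℚ) :
    matOf (X ᵥ* zeonSq A) =
        Aᵀ * matOf X * A - Matrix.diagonal (fun i => (Aᵀ * matOf X * A) i i) ∧
      Matrix.trace (Matrix.diagonal (fun i => (Aᵀ * matOf X * A) i i)) =
        Matrix.trace (Aᵀ * matOf X * A) ∧
      ((∀ i j, 0 ≤ A i j) → (∀ I, 0 ≤ X I) →
        ∀ i, 0 ≤ (Aᵀ * matOf X * A) i i) := by
  have hvec : ∀ (J : Pairs n), (X ᵥ* zeonSq A) J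
      = ∑ I : Pairs n, X I * (A I.1.1 J.1.1 * A I.1.2 J.1.2 + A I.1.1 J.1.2 * A I.1.2 J.1.1) := by
    intro J
    simp [Matrix.vecMul, dotProduct, zeonSq]
  refine ⟨?_, ?_, ?_⟩
  · ext i j
    rcases lt_trichotomy i j with h | h | h
    · have hd : Matrix.diagonal (fun i => (Aᵀ * matOf X * A) i i) i j = 0 :=
        Matrix.diagonal_apply_ne _ (Fin.ne_of_lt h)
      have hl : matOf (X ᵥ* zeonSq A) i j = (X ᵥ* zeonSq A) ⟨(i,j),h⟩ := by
        simp [matOf, h]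
      rw [Matrix.sub_apply, hd, sub_zero, key, hl, hvec]
    · subst h
      simp [matOf, Matrix.sub_apply, Matrix.diagonal_apply_eq]
    · have hd : Matrix.diagonal (fun i => (Aᵀ * matOf X * A) i i) i j = 0 :=
        Matrix.diagonal_apply_ne _ (Fin.ne_of_gt h)
      have hl : matOf (X ᵥ* zeonSq A) i j = (X ᵥ* zeonSq A) ⟨(j,i),h⟩ := by
        simp [matOf, h, not_lt_of_gt h]
      rw [Matrix.sub_apply, hd, sub_zero, key, hl, hvec]
      apply Finset.sum_congr rfl
      intros; ring
  · simp [Matrix.trace, Matrix.diag]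
  · intro hA hX i
    rw [key]
    apply Finset.sum_nonneg
    intro I _
    have := hX I
    have h1 := hA I.1.1 i
    have h2 := hA I.1.2 i
    positivity
end

section
/- For any n×n matrix A and X ∈ ℚ^{C(n,2)}: X·A^{∨2}·uᵀ = ½·tr(X̂·A(J−I)Aᵀ), where u is the all-ones vector of length C(n,2), J the n×n all-ones matrix, and I the n×n identity. -/
open Matrix BigOperators Filter

private lemma sum_pairs_aux {n : ℕ} (g : Fin n × Fin n → ℚ) :
    ∑ p : Pairs n, g p.val
      = ∑ p ∈ Finset.univ.filter (fun p : Fin n × Fin n => p.1 < p.2), g p := by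
  rw [Finset.sum_subtype (p := fun p : Fin n × Fin n => p.1 < p.2)
    (s := Finset.univ.filter (fun p : Fin n × Fin n => p.1 < p.2)) (by simp)]

private lemma sum_split_aux {n : ℕ} (f : Fin n × Fin n → ℚ) :
    ∑ p : Fin n × Fin n, f p =
      ∑ p ∈ Finset.univ.filter (fun p : Fin n × Fin n => p.1 < p.2), (f p + f p.swap)
        + ∑ i : Fin n, f (i, i) := by
  classical
  have h1 := Finset.sum_filter_add_sum_filter_not (Finset.univ : Finset (Fin n × Fin n))
    (fun p => p.1 < p.2) f
  have h2 := Finset.sum_filter_add_sum_filter_not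
    (Finset.univ.filter (fun p : Fin n × Fin n => ¬ p.1 < p.2)) (fun p => p.2 < p.1) f
  rw [Finset.filter_filter, Finset.filter_filter] at h2
  have e1 : (Finset.univ.filter fun p : Fin n × Fin n => ¬p.1 < p.2 ∧ p.2 < p.1)
      = Finset.univ.filter fun p : Fin n × Fin n => p.2 < p.1 := by
    apply Finset.filter_congr; intro p _; constructor <;> intro h
    · exact h.2
    · exact ⟨fun h' => absurd h (lt_asymm h'), h⟩
  have e2 : (Finset.univ.filter fun p : Fin n × Fin n => ¬p.1 < p.2 ∧ ¬p.2 < p.1)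
      = Finset.univ.filter fun p : Fin n × Fin n => p.1 = p.2 := by
    apply Finset.filter_congr; intro p _
    simp only [not_lt]
    exact ⟨fun h => le_antisymm h.2 h.1, fun h => ⟨le_of_eq h.symm, le_of_eq h⟩⟩
  rw [e1, e2] at h2
  have e3 : ∑ p ∈ Finset.univ.filter (fun p : Fin n × Fin n => p.1 < p.2), f p.swap
      = ∑ p ∈ Finset.univ.filter (fun p : Fin n × Fin n => p.2 < p.1), f p :=
    Finset.sum_nbij' (fun p => p.swap) (fun p => p.swap) (by simp) (by simp) (by simp)
      (by simp) (fun _ _ => rfl)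
  have e4 : (∑ i : Fin n, f (i, i))
      = ∑ p ∈ Finset.univ.filter (fun p : Fin n × Fin n => p.1 = p.2), f p :=
    Finset.sum_nbij' (fun i => (i, i)) (fun p => p.1) (by simp) (by simp)
      (by simp) (by simp [Prod.ext_iff]) (fun _ _ => rfl)
  rw [Finset.sum_add_distrib, e3, e4, ← h1, ← h2]
  ring

private lemma B_apply_aux {n : ℕ} (A : Matrix (Fin n) (Fin n) ℚ) (i j : Fin n) :
    (A * ((Matrix.of (fun _ _ => (1:ℚ)) : Matrix (Fin n) (Fin n) ℚ) - 1) * Aᵀ) i j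
      = (∑ k, A i k) * (∑ l, A j l) - ∑ k, A i k * A j k := by
  simp only [Matrix.mul_apply, Matrix.sub_apply, Matrix.one_apply, Matrix.transpose_apply,
    Matrix.of_apply, mul_sub, mul_ite, mul_one, mul_zero, Finset.sum_sub_distrib,
    Finset.sum_ite_eq', Finset.mem_univ, if_true, sub_mul, Finset.mul_sum]

theorem stmt7 {n : ℕ} (A : Matrix (Fin n) (Fin n) ℚ) (X : Pairs n → ℚ) :
    (X ᵥ* zeonSq A) ⬝ᵥ (fun _ => 1) =
      (1 / 2) *
        Matrix.trace (matOf X * (A * (Matrix.of (fun _ _ => (1 : ℚ)) - 1) * Aᵀ)) := by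
  classical
  set B : Matrix (Fin n) (Fin n) ℚ :=
    A * ((Matrix.of (fun _ _ => (1:ℚ)) : Matrix (Fin n) (Fin n) ℚ) - 1) * Aᵀ with hB
  have hBsymm : ∀ i j, B j i = B i j := by
    intro i j
    rw [hB, B_apply_aux, B_apply_aux]
    rw [mul_comm]
    congr 1
    exact Finset.sum_congr rfl fun k _ => mul_comm _ _
  -- LHS
  have hLHS : (X ᵥ* zeonSq A) ⬝ᵥ (fun _ => 1)
      = ∑ p ∈ Finset.univ.filter (fun p : Fin n × Fin n => p.1 < p.2),
          matOf X p.1 p.2 * B p.1 p.2 := by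
    simp only [dotProduct, Matrix.vecMul, zeonSq, Matrix.of_apply, mul_one]
    rw [Finset.sum_comm]
    have : ∀ p : Pairs n,
        (∑ q : Pairs n, X p * (A p.1.1 q.1.1 * A p.1.2 q.1.2 + A p.1.1 q.1.2 * A p.1.2 q.1.1))
          = X p * B p.1.1 p.1.2 := by
      intro p
      rw [← Finset.mul_sum]
      congr 1
      have hs := sum_split_aux (fun q : Fin n × Fin n => A p.1.1 q.1 * A p.1.2 q.2)
      have hgoal : ∑ q : Pairs n,
          (A p.1.1 q.1.1 * A p.1.2 q.1.2 + A p.1.1 q.1.2 * A p.1.2 q.1.1)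
          = ∑ q ∈ Finset.univ.filter (fun q : Fin n × Fin n => q.1 < q.2),
              (A p.1.1 q.1 * A p.1.2 q.2 + A p.1.1 q.2 * A p.1.2 q.1) :=
        sum_pairs_aux (fun q : Fin n × Fin n => A p.1.1 q.1 * A p.1.2 q.2 + A p.1.1 q.2 * A p.1.2 q.1)
      rw [hgoal, hB, B_apply_aux]
      have := hs
      simp only [Prod.fst_swap, Prod.snd_swap] at this
      rw [Fintype.sum_prod_type] at this
      simp only [← Finset.mul_sum] at this
      rw [← Finset.sum_mul] at this
      linarith [this]
    calc ∑ p : Pairs n, ∑ q : Pairs n,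
          X p * (A p.1.1 q.1.1 * A p.1.2 q.1.2 + A p.1.1 q.1.2 * A p.1.2 q.1.1)
        = ∑ p : Pairs n, X p * B p.1.1 p.1.2 := Finset.sum_congr rfl fun p _ => this p
      _ = ∑ p ∈ Finset.univ.filter (fun p : Fin n × Fin n => p.1 < p.2),
            matOf X p.1 p.2 * B p.1 p.2 := by
          rw [← sum_pairs_aux (fun p : Fin n × Fin n => matOf X p.1 p.2 * B p.1 p.2)]
          refine Finset.sum_congr rfl fun p _ => ?_
          congr 1
          simp [matOf, p.2]
  -- RHS
  have hRHS : Matrix.trace (matOf X * B)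
      = 2 * ∑ p ∈ Finset.univ.filter (fun p : Fin n × Fin n => p.1 < p.2),
          matOf X p.1 p.2 * B p.1 p.2 := by
    rw [Matrix.trace]
    simp only [Matrix.diag, Matrix.mul_apply]
    rw [← Fintype.sum_prod_type']
    rw [sum_split_aux (fun p : Fin n × Fin n => matOf X p.1 p.2 * B p.2 p.1)]
    have hdiag : ∀ i : Fin n, matOf X i i = 0 := by
      intro i; simp [matOf]
    simp only [Prod.fst_swap, Prod.snd_swap, hdiag, zero_mul, Finset.sum_const_zero, add_zero]
    rw [Finset.mul_sum]
    refine Finset.sum_congr rfl fun p hp => ?_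
    have hlt : p.1 < p.2 := (Finset.mem_filter.mp hp).2
    have hm : matOf X p.2 p.1 = matOf X p.1 p.2 := by
      simp [matOf, hlt, not_lt_of_gt hlt, lt_asymm hlt]
    rw [hm, hBsymm p.1 p.2]
    ring
  rw [hLHS, hRHS]
  ring
end

section
/- If A is an n×n row-stochastic matrix (nonnegative entries, each row summing to 1), then for every X ∈ ℚ^{C(n,2)}: X·A^{∨2}·uᵀ = ½·tr(X̂(J − AAᵀ)). -/
open Matrix BigOperators Filter

/-- Splitting a double sum into pairs `i < j`, `i > j` and the diagonal. -/
lemma pair_split {n : ℕ} (f : Fin n → Fin n → ℚ) :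
    ∑ p : Pairs n, (f p.1.1 p.1.2 + f p.1.2 p.1.1)
      = (∑ k, ∑ l, f k l) - ∑ k, f k k := by
  have hsub : ∑ p : Pairs n, (f p.1.1 p.1.2 + f p.1.2 p.1.1)
      = ∑ p ∈ Finset.univ.filter (fun p : Fin n × Fin n => p.1 < p.2),
          (f p.1 p.2 + f p.2 p.1) :=
    (Finset.sum_subtype (Finset.univ.filter fun p : Fin n × Fin n => p.1 < p.2) (fun x => by simp) (fun p => f p.1 p.2 + f p.2 p.1)).symm
  have hswap : ∑ p ∈ Finset.univ.filter (fun p : Fin n × Fin n => p.2 < p.1), f p.1 p.2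
      = ∑ p ∈ Finset.univ.filter (fun p : Fin n × Fin n => p.1 < p.2), f p.2 p.1 := by
    apply Finset.sum_nbij' (fun p => (p.2, p.1)) (fun p => (p.2, p.1)) <;> simp
  have h1 : ∑ p ∈ Finset.univ.filter (fun p : Fin n × Fin n => p.1 < p.2), f p.1 p.2
      + ∑ p ∈ Finset.univ.filter (fun p : Fin n × Fin n => p.2 < p.1), f p.1 p.2
      = ∑ p ∈ Finset.univ.filter (fun p : Fin n × Fin n => p.1 ≠ p.2), f p.1 p.2 := by
    rw [← Finset.sum_union]
    · congr 1
      ext p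
      simp [lt_or_lt_iff_ne, or_comm]
    · rw [Finset.disjoint_filter]
      intro p _ h h'
      exact absurd (h.trans h') (lt_irrefl _)
  have h2 : ∑ p ∈ Finset.univ.filter (fun p : Fin n × Fin n => p.1 = p.2), f p.1 p.2
      = ∑ k, f k k := by
    apply Finset.sum_nbij' (fun p => p.1) (fun k => (k, k)) <;> simp
  have h3 := Finset.sum_filter_add_sum_filter_not Finset.univ
      (fun p : Fin n × Fin n => p.1 = p.2) (fun p => f p.1 p.2)
  have h4 : ∑ p : Fin n × Fin n, f p.1 p.2 = ∑ k, ∑ l, f k l := by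
    rw [Fintype.sum_prod_type]
  rw [hsub, Finset.sum_add_distrib, ← hswap]
  simp only [ne_eq] at h1
  linarith [h1, h2, h3, h4]

theorem stmt8 {n : ℕ} (A : Matrix (Fin n) (Fin n) ℚ)
    (hA0 : ∀ i j, 0 ≤ A i j) (hA1 : ∀ i, ∑ j, A i j = 1) (X : Pairs n → ℚ) :
    (X ᵥ* zeonSq A) ⬝ᵥ (fun _ => 1) =
      (1 / 2) * Matrix.trace (matOf X * (Matrix.of (fun _ _ => (1 : ℚ)) - A * Aᵀ)) := by
  classical
  have h1 : ∀ i j : Fin n, ∑ k, ∑ l, A i k * A j l = 1 := by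
    intro i j
    calc ∑ k, ∑ l, A i k * A j l = ∑ k, A i k * ∑ l, A j l := by
          simp [Finset.mul_sum]
      _ = 1 := by simp [hA1]
  -- LHS
  have hL : (X ᵥ* zeonSq A) ⬝ᵥ (fun _ => 1)
      = ∑ p : Pairs n, X p * (1 - ∑ k, A p.1.1 k * A p.1.2 k) := by
    simp only [dotProduct, vecMul, zeonSq, Matrix.of_apply, mul_one]
    rw [Finset.sum_comm]
    refine Finset.sum_congr rfl fun I _ => ?_
    rw [← Finset.mul_sum]
    congr 1
    rw [pair_split (fun k l => A I.1.1 k * A I.1.2 l), h1]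
  -- RHS
  have hR : Matrix.trace (matOf X * (Matrix.of (fun _ _ => (1 : ℚ)) - A * Aᵀ))
      = ∑ p : Pairs n, 2 * (X p * (1 - ∑ k, A p.1.1 k * A p.1.2 k)) := by
    set f : Fin n → Fin n → ℚ := fun i j =>
      matOf X i j * ((1 : ℚ) - ∑ k, A j k * A i k) with hf
    have htr : Matrix.trace (matOf X * (Matrix.of (fun _ _ => (1 : ℚ)) - A * Aᵀ))
        = ∑ k, ∑ l, f k l := by
      simp [Matrix.trace, Matrix.mul_apply, Matrix.diag, hf, Matrix.sub_apply,
        Matrix.transpose_apply, Matrix.mul_apply]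
    have hdiag : ∀ k : Fin n, f k k = 0 := by
      intro k
      simp [hf, matOf]
    have hps := pair_split f
    have hzero : ∑ k, f k k = 0 := by simp [hdiag]
    rw [htr, ← sub_zero (∑ k, ∑ l, f k l), ← hzero, ← hps]
    refine Finset.sum_congr rfl fun p _ => ?_
    have hp := p.2
    have hnp : ¬ (p.1.2 < p.1.1) := not_lt.2 hp.le
    have hBsymm : ∑ k, A p.1.2 k * A p.1.1 k = ∑ k, A p.1.1 k * A p.1.2 k :=
      Finset.sum_congr rfl fun k _ => mul_comm _ _
    simp only [hf, matOf, Matrix.of_apply, dif_pos hp, dif_neg hnp, dif_pos hp]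
    rw [hBsymm]
    ring
  rw [hL, hR, Finset.mul_sum]
  refine Finset.sum_congr rfl fun p _ => ?_
  ring
end

section
/- (Integration-by-parts for zeons) If A is an n×n row-stochastic matrix, then for every X ∈ ℚ^{C(n,2)}: X·(I − A^{∨2})·uᵀ = ½·tr(AᵀX̂A). -/
open Matrix BigOperators Filter

private lemma matOf_symm {n : ℕ} (X : Pairs n → ℚ) (i j : Fin n) :
    matOf X i j = matOf X j i := by
  unfold matOf
  rcases lt_trichotomy i j with h | h | h
  · simp [h, asymm h]
  · simp [h]
  · simp [h, asymm h]

private lemma sum_split {n : ℕ} (g : Fin n × Fin n → ℚ) :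
    ∑ p ∈ Finset.univ.filter (fun p : Fin n × Fin n => p.1 ≠ p.2), g p
      = ∑ p ∈ Finset.univ.filter (fun p : Fin n × Fin n => p.1 < p.2), (g p + g p.swap) := by
  have h1 : (Finset.univ.filter (fun p : Fin n × Fin n => p.1 ≠ p.2))
      = (Finset.univ.filter (fun p : Fin n × Fin n => p.1 < p.2)) ∪
        (Finset.univ.filter (fun p : Fin n × Fin n => p.2 < p.1)) := by
    ext p
    simp only [Finset.mem_filter, Finset.mem_union, Finset.mem_univ, true_and]
    exact ne_iff_lt_or_gt
  have hdisj : Disjoint (Finset.univ.filter (fun p : Fin n × Fin n => p.1 < p.2))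
      (Finset.univ.filter (fun p : Fin n × Fin n => p.2 < p.1)) := by
    rw [Finset.disjoint_left]
    intro p hp hq
    simp only [Finset.mem_filter] at hp hq
    exact absurd hq.2 (asymm hp.2)
  rw [h1, Finset.sum_union hdisj, Finset.sum_add_distrib]
  congr 1
  refine Finset.sum_equiv (Equiv.prodComm (Fin n) (Fin n)) ?_ ?_
  · intro p; simp
  · intro p hp; rfl

private lemma sum_pairs {n : ℕ} (f : Fin n × Fin n → ℚ) :
    ∑ p ∈ Finset.univ.filter (fun p : Fin n × Fin n => p.1 < p.2), f p
      = ∑ I : Pairs n, f I.1 :=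
  Finset.sum_subtype _ (by simp) f

theorem stmt9 {n : ℕ} (A : Matrix (Fin n) (Fin n) ℚ)
    (hA0 : ∀ i j, 0 ≤ A i j) (hA1 : ∀ i, ∑ j, A i j = 1) (X : Pairs n → ℚ) :
    (X ᵥ* (1 - zeonSq A)) ⬝ᵥ (fun _ => 1) =
      (1 / 2) * Matrix.trace (Aᵀ * matOf X * A) := by
  classical
  set c : Fin n × Fin n → ℚ := fun p => ∑ k, A p.1 k * A p.2 k with hc
  -- row-sum consequence for a fixed pair (i, j)
  have hzsum : ∀ I : Pairs n, ∑ J : Pairs n, zeonSq A I J = 1 - c I.1 := by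
    intro I
    obtain ⟨⟨i, j⟩, hij⟩ := I
    set g : Fin n × Fin n → ℚ := fun p => A i p.1 * A j p.2 with hg
    have htot : ∑ p : Fin n × Fin n, g p = 1 := by
      rw [Fintype.sum_prod_type, ← Finset.sum_mul_sum, hA1 i, hA1 j, mul_one]
    have hdiag : ∑ p ∈ Finset.univ.filter (fun p : Fin n × Fin n => p.1 = p.2), g p
        = ∑ k, A i k * A j k := by
      rw [Finset.sum_filter, Fintype.sum_prod_type]
      simp [hg]
    have hsplit := Finset.sum_filter_add_sum_filter_not Finset.univ
      (fun p : Fin n × Fin n => p.1 = p.2) g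
    have hne : ∑ p ∈ Finset.univ.filter (fun p : Fin n × Fin n => p.1 ≠ p.2), g p
        = 1 - ∑ k, A i k * A j k := by
      have : ∑ p ∈ Finset.univ.filter (fun p : Fin n × Fin n => ¬ p.1 = p.2), g p
          = 1 - ∑ k, A i k * A j k := by
        rw [eq_sub_iff_add_eq, ← hdiag, add_comm, hsplit, htot]
      simpa using this
    calc ∑ J : Pairs n, zeonSq A ⟨(i, j), hij⟩ J
        = ∑ p ∈ Finset.univ.filter (fun p : Fin n × Fin n => p.1 < p.2), (g p + g p.swap) := by
          rw [sum_pairs]; rfl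
      _ = ∑ p ∈ Finset.univ.filter (fun p : Fin n × Fin n => p.1 ≠ p.2), g p :=
          (sum_split g).symm
      _ = 1 - c (i, j) := hne
  -- LHS reduction
  have hL : (X ᵥ* (1 - zeonSq A)) ⬝ᵥ (fun _ => 1)
      = ∑ I : Pairs n, matOf X I.1.1 I.1.2 * c I.1 := by
    have h1 : (X ᵥ* (1 - zeonSq A)) ⬝ᵥ (fun _ => 1)
        = ∑ I : Pairs n, X I * ((1 : ℚ) - ∑ J : Pairs n, zeonSq A I J) := by
      simp only [dotProduct, Matrix.vecMul, Matrix.sub_apply, Matrix.one_apply, mul_one]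
      rw [Finset.sum_comm]
      refine Finset.sum_congr rfl fun I _ => ?_
      rw [← Finset.mul_sum, Finset.sum_sub_distrib]
      simp
    rw [h1]
    refine Finset.sum_congr rfl fun I _ => ?_
    rw [hzsum I]
    have hXI : matOf X I.1.1 I.1.2 = X I := by
      obtain ⟨⟨i, j⟩, hij⟩ := I
      simp [matOf, hij]
    rw [hXI]; ring
  -- RHS reduction
  have hR : Matrix.trace (Aᵀ * matOf X * A)
      = ∑ i, ∑ j, matOf X i j * c (i, j) := by
    simp only [Matrix.trace, Matrix.diag_apply, Matrix.mul_apply, Matrix.transpose_apply,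
      Finset.sum_mul, Finset.mul_sum, hc]
    rw [Finset.sum_comm]
    conv_rhs => rw [Finset.sum_comm]
    refine Finset.sum_congr rfl fun j _ => ?_
    rw [Finset.sum_comm]
    refine Finset.sum_congr rfl fun i _ => Finset.sum_congr rfl fun k _ => ?_
    ring
  have hR2 : ∑ i, ∑ j, matOf X i j * c (i, j)
      = ∑ p ∈ Finset.univ.filter (fun p : Fin n × Fin n => p.1 ≠ p.2),
          matOf X p.1 p.2 * c p := by
    have hprod : ∑ p : Fin n × Fin n, matOf X p.1 p.2 * c p
        = ∑ i, ∑ j, matOf X i j * c (i, j) := by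
      rw [Fintype.sum_prod_type]
    rw [← hprod]
    rw [← Finset.sum_filter_add_sum_filter_not Finset.univ
      (fun p : Fin n × Fin n => p.1 = p.2) (fun p => matOf X p.1 p.2 * c p)]
    have hz : ∑ p ∈ Finset.univ.filter (fun p : Fin n × Fin n => p.1 = p.2),
        matOf X p.1 p.2 * c p = 0 := by
      refine Finset.sum_eq_zero fun p hp => ?_
      simp only [Finset.mem_filter] at hp
      rw [hp.2]
      simp [matOf]
    rw [hz, zero_add]
  have hLfilter : ∑ I : Pairs n, matOf X (I : Fin n × Fin n).1 (I : Fin n × Fin n).2 * c I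
      = ∑ p ∈ Finset.univ.filter (fun p : Fin n × Fin n => p.1 < p.2),
          matOf X p.1 p.2 * c p :=
    (sum_pairs (fun p => matOf X p.1 p.2 * c p)).symm
  rw [hL, hR, hR2, sum_split, hLfilter, Finset.mul_sum]
  refine Finset.sum_congr rfl fun p hp => ?_
  have hcswap : c p.swap = c p := by
    refine Finset.sum_congr rfl fun k _ => mul_comm _ _
  have hms : matOf X p.swap.1 p.swap.2 = matOf X p.1 p.2 := matOf_symm X p.2 p.1
  rw [hcswap, hms]
  ring
end

section
/- Let A be an n×n row-stochastic matrix and X ∈ ℚ^{C(n,2)} nonnegative. If X·A^{∨2} = X, then X̂ = AᵀX̂A. -/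
open Matrix BigOperators Filter

lemma matOf_diag {n : ℕ} (X : Pairs n → ℚ) (i : Fin n) : matOf X i i = 0 := by
  simp [matOf]

lemma matOf_lt {n : ℕ} (X : Pairs n → ℚ) {i j : Fin n} (h : i < j) :
    matOf X i j = X ⟨(i, j), h⟩ := by
  simp [matOf, h]

lemma matOf_gt {n : ℕ} (X : Pairs n → ℚ) {i j : Fin n} (h : i < j) :
    matOf X j i = X ⟨(i, j), h⟩ := by
  simp [matOf, h, asymm h]

/-- Decompose a double sum of a function vanishing on the diagonal into pair sums. -/
lemma pairSum {n : ℕ} (g : Fin n → Fin n → ℚ) (hg : ∀ i, g i i = 0) :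
    ∑ i, ∑ j, g i j = ∑ I : Pairs n, (g I.1.1 I.1.2 + g I.1.2 I.1.1) := by
  classical
  have key : ∀ p : Fin n × Fin n,
      g p.1 p.2 = (if p.1 < p.2 then g p.1 p.2 else 0)
        + (if p.2 < p.1 then g p.1 p.2 else 0) := by
    intro p
    rcases lt_trichotomy p.1 p.2 with h | h | h
    · simp [h, asymm h]
    · simp [h, hg]
    · simp [h, asymm h]
  have h1 : ∑ i, ∑ j, g i j = ∑ p : Fin n × Fin n, g p.1 p.2 := by
    rw [Fintype.sum_prod_type]
  rw [h1]
  calc ∑ p : Fin n × Fin n, g p.1 p.2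
      = ∑ p : Fin n × Fin n, ((if p.1 < p.2 then g p.1 p.2 else 0)
          + (if p.2 < p.1 then g p.1 p.2 else 0)) := by
        exact Finset.sum_congr rfl fun p _ => key p
    _ = (∑ p : Fin n × Fin n, if p.1 < p.2 then g p.1 p.2 else 0)
          + ∑ p : Fin n × Fin n, if p.2 < p.1 then g p.1 p.2 else 0 := by
        rw [Finset.sum_add_distrib]
    _ = (∑ p : Fin n × Fin n, if p.1 < p.2 then g p.1 p.2 else 0)
          + ∑ p : Fin n × Fin n, if p.1 < p.2 then g p.2 p.1 else 0 := by
        congr 1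
        exact Fintype.sum_equiv (Equiv.prodComm _ _)
          (fun p => if p.2 < p.1 then g p.1 p.2 else 0)
          (fun p => if p.1 < p.2 then g p.2 p.1 else 0)
          (fun p => by simp [Equiv.prodComm]; by_cases h : p.2 < p.1 <;> simp [h])
    _ = ∑ p : Fin n × Fin n, ((if p.1 < p.2 then g p.1 p.2 else 0)
          + (if p.1 < p.2 then g p.2 p.1 else 0)) := by
        rw [Finset.sum_add_distrib]
    _ = ∑ p : Fin n × Fin n, if p.1 < p.2 then g p.1 p.2 + g p.2 p.1 else 0 := by
        refine Finset.sum_congr rfl fun p _ => ?_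
        by_cases h : p.1 < p.2 <;> simp [h]
    _ = ∑ p ∈ Finset.univ.filter (fun p : Fin n × Fin n => p.1 < p.2),
          (g p.1 p.2 + g p.2 p.1) := by
        rw [Finset.sum_filter]
    _ = ∑ I : Pairs n, (g I.1.1 I.1.2 + g I.1.2 I.1.1) := by
        exact Finset.sum_subtype _ (by simp) _

lemma Bform {n : ℕ} (A : Matrix (Fin n) (Fin n) ℚ) (X : Pairs n → ℚ) (k l : Fin n) :
    (Aᵀ * matOf X * A) k l
      = ∑ I : Pairs n, X I * (A I.1.1 k * A I.1.2 l + A I.1.1 l * A I.1.2 k) := by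
  have h0 : (Aᵀ * matOf X * A) k l = ∑ i, ∑ j, A i k * matOf X i j * A j l := by
    simp only [Matrix.mul_apply, Matrix.transpose_apply, Finset.sum_mul]
    rw [Finset.sum_comm]
  rw [h0, pairSum (fun i j => A i k * matOf X i j * A j l)
    (fun i => by simp [matOf_diag])]
  refine Finset.sum_congr rfl fun I _ => ?_
  have h1 : matOf X I.1.1 I.1.2 = X I := by
    rw [matOf_lt X I.2]
  have h2 : matOf X I.1.2 I.1.1 = X I := by
    rw [matOf_gt X I.2]
  simp only [h1, h2]
  ring

theorem stmt10 {n : ℕ} (A : Matrix (Fin n) (Fin n) ℚ)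
    (hA0 : ∀ i j, 0 ≤ A i j) (hA1 : ∀ i, ∑ j, A i j = 1)
    (X : Pairs n → ℚ) (hX : ∀ I, 0 ≤ X I)
    (h : X ᵥ* zeonSq A = X) :
    matOf X = Aᵀ * matOf X * A := by
  classical
  set B := Aᵀ * matOf X * A with hB
  -- off-diagonal entries
  have hvm : ∀ J : Pairs n,
      ∑ I : Pairs n, X I * (A I.1.1 J.1.1 * A I.1.2 J.1.2 + A I.1.1 J.1.2 * A I.1.2 J.1.1)
        = X J := by
    intro J
    have := congrFun h J
    simpa [Matrix.vecMul, dotProduct, zeonSq] using this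
  have hoff : ∀ k l, k ≠ l → B k l = matOf X k l := by
    intro k l hkl
    rcases lt_or_gt_of_ne hkl with hlt | hgt
    · rw [matOf_lt X hlt, hB, Bform]
      exact hvm ⟨(k, l), hlt⟩
    · rw [matOf_gt X hgt, hB, Bform]
      rw [← hvm ⟨(l, k), hgt⟩]
      exact Finset.sum_congr rfl fun I _ => by ring
  -- total sums agree
  have rowsum : ∀ (M : Matrix (Fin n) (Fin n) ℚ) i, ∑ l, (M * A) i l = ∑ j, M i j := by
    intro M i
    simp only [Matrix.mul_apply]
    rw [Finset.sum_comm]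
    simp [← Finset.mul_sum, hA1]
  have colsum : ∀ (M : Matrix (Fin n) (Fin n) ℚ) l, ∑ k, (Aᵀ * M) k l = ∑ i, M i l := by
    intro M l
    simp only [Matrix.mul_apply, Matrix.transpose_apply]
    rw [Finset.sum_comm]
    simp [← Finset.sum_mul, hA1]
  have htot : ∑ k, ∑ l, B k l = ∑ i, ∑ j, matOf X i j := by
    calc ∑ k, ∑ l, B k l = ∑ k, ∑ j, (Aᵀ * matOf X) k j :=
          Finset.sum_congr rfl fun k _ => rowsum (Aᵀ * matOf X) k
      _ = ∑ j, ∑ k, (Aᵀ * matOf X) k j := Finset.sum_comm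
      _ = ∑ j, ∑ i, matOf X i j := Finset.sum_congr rfl fun j _ => colsum _ j
      _ = ∑ i, ∑ j, matOf X i j := Finset.sum_comm
  -- row splitting
  have hsplit : ∀ k, ∑ l, B k l = B k k + ∑ l, matOf X k l := by
    intro k
    rw [← Finset.add_sum_erase _ _ (Finset.mem_univ k)]
    congr 1
    rw [← Finset.add_sum_erase _ (fun l => matOf X k l) (Finset.mem_univ k),
      matOf_diag, zero_add]
    exact Finset.sum_congr rfl fun l hl =>
      hoff k l (Ne.symm (Finset.ne_of_mem_erase hl))
  have hdiag0 : ∑ k, B k k = 0 := by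
    have h1 : ∑ k, ∑ l, B k l = ∑ k, B k k + ∑ k, ∑ l, matOf X k l := by
      rw [← Finset.sum_add_distrib]
      exact Finset.sum_congr rfl fun k _ => hsplit k
    rw [htot] at h1
    linarith
  have hBnn : ∀ k, 0 ≤ B k k := by
    intro k
    rw [hB, Bform]
    refine Finset.sum_nonneg fun I _ => mul_nonneg (hX I) ?_
    exact add_nonneg (mul_nonneg (hA0 _ _) (hA0 _ _)) (mul_nonneg (hA0 _ _) (hA0 _ _))
  have hBkk : ∀ k, B k k = 0 := by
    intro k
    have := (Finset.sum_eq_zero_iff_of_nonneg (fun k _ => hBnn k)).mp hdiag0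
    exact this k (Finset.mem_univ k)
  ext i j
  rcases eq_or_ne i j with rfl | hne
  · rw [matOf_diag, hBkk]
  · exact (hoff i j hne).symm
end

section
/- Let A be an n×n row-stochastic matrix whose powers Aᵏ converge to a matrix Ω such that ΩᵀΩ has all positive entries (e.g., A irreducible and aperiodic with limit uᵀπ, π > 0). If X ∈ ℝ^{C(n,2)} is nonnegative and satisfies X̂ = AX̂Aᵀ, then X = 0. Likewise, if X̂ = AᵀX̂A, then X = 0. -/
open Matrix BigOperators Filter

/-- Termwise vanishing from a zero diagonal of `W M Wᵀ`-type expressions. -/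
lemma helper_zero {n : ℕ} (M W : Matrix (Fin n) (Fin n) ℝ)
    (hM : ∀ a b, 0 ≤ M a b) (hW : ∀ a b, 0 ≤ W a b)
    (hdiag : ∀ i, ∑ b, (∑ a, W i a * M a b) * W i b = 0)
    (hcol : ∀ a b, 0 < ∑ i, W i a * W i b) :
    ∀ a b, M a b = 0 := by
  have hterm : ∀ i a b, W i a * M a b * W i b = 0 := by
    intro i a b
    have h0 : ∑ b, ∑ a, W i a * M a b * W i b = 0 := by
      rw [← hdiag i]
      exact Finset.sum_congr rfl fun b _ => by rw [Finset.sum_mul]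
    have hnn : ∀ b ∈ Finset.univ, 0 ≤ ∑ a, W i a * M a b * W i b := fun b _ =>
      Finset.sum_nonneg fun a _ => mul_nonneg (mul_nonneg (hW i a) (hM a b)) (hW i b)
    have h1 := (Finset.sum_eq_zero_iff_of_nonneg hnn).mp h0 b (Finset.mem_univ b)
    have hnn2 : ∀ a ∈ Finset.univ, (0:ℝ) ≤ W i a * M a b * W i b := fun a _ =>
      mul_nonneg (mul_nonneg (hW i a) (hM a b)) (hW i b)
    exact (Finset.sum_eq_zero_iff_of_nonneg hnn2).mp h1 a (Finset.mem_univ a)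
  intro a b
  have hz : M a b * ∑ i, W i a * W i b = 0 := by
    rw [Finset.mul_sum]
    apply Finset.sum_eq_zero
    intro i _
    nlinarith [hterm i a b]
  rcases mul_eq_zero.mp hz with h | h
  · exact h
  · exact absurd h (ne_of_gt (hcol a b))

theorem stmt13 {n : ℕ} (A : Matrix (Fin n) (Fin n) ℝ)
    (hA0 : ∀ i j, 0 ≤ A i j) (hA1 : ∀ i, ∑ j, A i j = 1)
    (Ω : Matrix (Fin n) (Fin n) ℝ)
    (hlim : Filter.Tendsto (fun k => A ^ k) Filter.atTop (nhds Ω))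
    (hpos : ∀ i j, 0 < (Ωᵀ * Ω) i j)
    (X : Pairs n → ℝ) (hX : ∀ I, 0 ≤ X I) :
    (matOf X = A * matOf X * Aᵀ → X = 0) ∧
      (matOf X = Aᵀ * matOf X * A → X = 0) := by
  set M := matOf X with hMdef
  -- basic facts about M
  have hMnn : ∀ a b, 0 ≤ M a b := by
    intro a b
    simp only [hMdef, matOf, Matrix.of_apply]
    split_ifs <;> first | exact hX _ | exact le_refl 0
  have hMdiag : ∀ a, M a a = 0 := by
    intro a
    simp [hMdef, matOf, lt_irrefl]
  -- entrywise convergence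
  have hent : ∀ i j, Tendsto (fun k => (A ^ k) i j) atTop (nhds (Ω i j)) :=
    fun i j => tendsto_pi_nhds.mp (tendsto_pi_nhds.mp hlim i) j
  have hpow0 : ∀ k i j, 0 ≤ (A ^ k) i j := by
    intro k
    induction k with
    | zero => intro i j; by_cases h : i = j <;> simp [pow_zero, Matrix.one_apply, h]
    | succ k ih =>
      intro i j
      rw [pow_succ, Matrix.mul_apply]
      exact Finset.sum_nonneg fun l _ => mul_nonneg (ih i l) (hA0 l j)
  have hpowsum : ∀ k i, ∑ j, (A ^ k) i j = 1 := by
    intro k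
    induction k with
    | zero => intro i; simp [pow_zero, Matrix.one_apply]
    | succ k ih =>
      intro i
      simp only [pow_succ, Matrix.mul_apply]
      rw [Finset.sum_comm]
      calc ∑ l, ∑ j, (A ^ k) i l * A l j
          = ∑ l, (A ^ k) i l * ∑ j, A l j :=
            Finset.sum_congr rfl fun l _ => (Finset.mul_sum _ _ _).symm
        _ = 1 := by simp [hA1, ih]
  -- properties of Ω
  have hΩ0 : ∀ i j, 0 ≤ Ω i j := fun i j =>
    le_of_tendsto_of_tendsto' tendsto_const_nhds (hent i j) (fun k => hpow0 k i j)
  have hΩsum : ∀ i, ∑ j, Ω i j = 1 := by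
    intro i
    have h1 : Tendsto (fun k => ∑ j, (A ^ k) i j) atTop (nhds (∑ j, Ω i j)) :=
      tendsto_finset_sum _ fun j _ => hent i j
    exact tendsto_nhds_unique (by simpa [hpowsum] using h1)
      (tendsto_const_nhds : Tendsto (fun _ : ℕ => (1:ℝ)) atTop (nhds 1))
  have hΩidem : ∀ i j, ∑ l, Ω i l * Ω l j = Ω i j := by
    intro i j
    have h1 : Tendsto (fun k => ∑ l, (A ^ k) i l * (A ^ k) l j) atTop
        (nhds (∑ l, Ω i l * Ω l j)) :=
      tendsto_finset_sum _ fun l _ => (hent i l).mul (hent l j)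
    have h2 : Tendsto (fun k => (A ^ (2 * k)) i j) atTop (nhds (Ω i j)) :=
      (hent i j).comp (tendsto_atTop_atTop.mpr fun b => ⟨b, fun a ha => by omega⟩)
    have h3 : (fun k => ∑ l, (A ^ k) i l * (A ^ k) l j) = fun k => (A ^ (2 * k)) i j := by
      funext k
      rw [two_mul, pow_add, Matrix.mul_apply]
    rw [h3] at h1
    exact tendsto_nhds_unique h1 h2
  have hPentry : ∀ i j, (Ωᵀ * Ω) i j = ∑ m, Ω m i * Ω m j := by
    intro i j
    simp [Matrix.mul_apply, Matrix.transpose_apply]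
  -- positivity of ΩᵀΩ entrywise, as sums
  have hPpos : ∀ a b, 0 < ∑ i, Ω i a * Ω i b := by
    intro a b
    have := hpos a b
    rwa [hPentry a b] at this
  -- symmetry of positivity: Ω i j > 0 → Ω j i > 0 (maximum principle)
  have keyB : ∀ i j, 0 < Ω i j → 0 < Ω j i := by
    intro i j hij
    obtain ⟨x, hx⟩ : ∃ x, 0 < Ω x i := by
      by_contra h
      push_neg at h
      have hz : ∀ m ∈ Finset.univ, Ω m i * Ω m i = 0 := fun m _ => by
        have h0 : Ω m i = 0 := le_antisymm (h m) (hΩ0 m i)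
        rw [h0, zero_mul]
      have hp := hPpos i i
      rw [Finset.sum_eq_zero hz] at hp
      exact lt_irrefl 0 hp
    obtain ⟨k, -, hk⟩ := Finset.exists_max_image (Finset.univ : Finset (Fin n))
      (fun m => Ω m i) ⟨x, Finset.mem_univ x⟩
    set α := Ω k i with hα
    have hαpos : 0 < α := lt_of_lt_of_le hx (hk x (Finset.mem_univ x))
    have eqmax : ∀ m, Ω m i = α → ∀ l, 0 < Ω m l → Ω l i = α := by
      intro m hm l hl
      have hsum0 : ∑ l, Ω m l * (α - Ω l i) = 0 := by
        have e1 : ∑ l, Ω m l * (α - Ω l i) = (∑ l, Ω m l) * α - ∑ l, Ω m l * Ω l i := by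
          rw [Finset.sum_mul, ← Finset.sum_sub_distrib]
          exact Finset.sum_congr rfl fun l _ => by ring
        rw [e1, hΩsum m, hΩidem m i, hm, one_mul, sub_self]
      have hnn : ∀ l ∈ Finset.univ, (0:ℝ) ≤ Ω m l * (α - Ω l i) := fun l _ =>
        mul_nonneg (hΩ0 m l) (sub_nonneg.mpr (hk l (Finset.mem_univ l)))
      have h0 := (Finset.sum_eq_zero_iff_of_nonneg hnn).mp hsum0 l (Finset.mem_univ l)
      rcases mul_eq_zero.mp h0 with h | h
      · exact absurd h (ne_of_gt hl)
      · linarith [sub_eq_zero.mp h]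
    have hii : Ω i i = α := eqmax k rfl i hαpos
    have hji : Ω j i = α := eqmax i hii j hij
    rw [hji]; exact hαpos
  -- positivity of ΩΩᵀ entrywise
  have hQpos : ∀ a b, 0 < ∑ i, Ω a i * Ω b i := by
    intro a b
    obtain ⟨m, hm⟩ : ∃ m, 0 < Ω m a * Ω m b := by
      by_contra h
      push_neg at h
      have h0 : ∀ m ∈ Finset.univ, Ω m a * Ω m b = 0 := fun m _ =>
        le_antisymm (h m) (mul_nonneg (hΩ0 m a) (hΩ0 m b))
      have hp := hPpos a b
      rw [Finset.sum_eq_zero h0] at hp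
      exact lt_irrefl 0 hp
    have hma : 0 < Ω m a := by nlinarith [hΩ0 m a, hΩ0 m b]
    have hmb : 0 < Ω m b := by nlinarith [hΩ0 m a, hΩ0 m b]
    exact Finset.sum_pos' (fun i _ => mul_nonneg (hΩ0 a i) (hΩ0 b i))
      ⟨m, Finset.mem_univ m, mul_pos (keyB m a hma) (keyB m b hmb)⟩
  -- from M a b = 0 to X = 0
  have Xzero : (∀ a b, M a b = 0) → X = 0 := by
    intro hz
    funext I
    obtain ⟨⟨i, j⟩, hIJ⟩ := I
    have := hz i j
    simpa [hMdef, matOf, hIJ] using this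
  constructor
  · -- case 1 : M = A M Aᵀ
    intro h
    have hiter : ∀ k, M = (A ^ k) * M * (A ^ k)ᵀ := by
      intro k
      induction k with
      | zero => simp
      | succ k ih =>
        calc M = A * M * Aᵀ := h
          _ = A * ((A ^ k) * M * (A ^ k)ᵀ) * Aᵀ := by rw [← ih]
          _ = (A ^ (k+1)) * M * ((A ^ (k+1))ᵀ) := by
              rw [pow_succ']
              simp only [Matrix.transpose_mul, Matrix.mul_assoc]
    have hdiag : ∀ i, ∑ b, (∑ a, Ω i a * M a b) * Ω i b = 0 := by
      intro i
      have h1 : Tendsto (fun k => ∑ b, (∑ a, (A ^ k) i a * M a b) * (A ^ k) i b) atTop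
          (nhds (∑ b, (∑ a, Ω i a * M a b) * Ω i b)) :=
        tendsto_finset_sum _ fun b _ =>
          (tendsto_finset_sum _ fun a _ => (hent i a).mul tendsto_const_nhds).mul (hent i b)
      have h2 : (fun k => ∑ b, (∑ a, (A ^ k) i a * M a b) * (A ^ k) i b)
          = fun _ => M i i := by
        funext k
        have := hiter k
        calc ∑ b, (∑ a, (A ^ k) i a * M a b) * (A ^ k) i b
            = ((A ^ k) * M * (A ^ k)ᵀ) i i := by
              simp only [Matrix.mul_apply, Matrix.transpose_apply]
          _ = M i i := by rw [← this]
      rw [h2] at h1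
      have h3 := tendsto_nhds_unique h1
        (tendsto_const_nhds : Tendsto (fun _ : ℕ => M i i) atTop (nhds (M i i)))
      rw [h3, hMdiag i]
    exact Xzero (helper_zero M Ω hMnn hΩ0 hdiag hPpos)
  · -- case 2 : M = Aᵀ M A
    intro h
    have hiter : ∀ k, M = (A ^ k)ᵀ * M * (A ^ k) := by
      intro k
      induction k with
      | zero => simp
      | succ k ih =>
        calc M = Aᵀ * M * A := h
          _ = Aᵀ * ((A ^ k)ᵀ * M * (A ^ k)) * A := by rw [← ih]
          _ = (A ^ (k+1))ᵀ * M * (A ^ (k+1)) := by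
              rw [pow_succ]
              simp only [Matrix.transpose_mul, Matrix.mul_assoc]
    have hdiag : ∀ i, ∑ b, (∑ a, Ωᵀ i a * M a b) * Ωᵀ i b = 0 := by
      intro i
      have h1 : Tendsto (fun k => ∑ b, (∑ a, (A ^ k) a i * M a b) * (A ^ k) b i) atTop
          (nhds (∑ b, (∑ a, Ω a i * M a b) * Ω b i)) :=
        tendsto_finset_sum _ fun b _ =>
          (tendsto_finset_sum _ fun a _ => (hent a i).mul tendsto_const_nhds).mul (hent b i)
      have h2 : (fun k => ∑ b, (∑ a, (A ^ k) a i * M a b) * (A ^ k) b i)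
          = fun _ => M i i := by
        funext k
        have := hiter k
        calc ∑ b, (∑ a, (A ^ k) a i * M a b) * (A ^ k) b i
            = ((A ^ k)ᵀ * M * (A ^ k)) i i := by
              simp only [Matrix.mul_apply, Matrix.transpose_apply]
          _ = M i i := by rw [← this]
      rw [h2] at h1
      have h3 := tendsto_nhds_unique h1
        (tendsto_const_nhds : Tendsto (fun _ : ℕ => M i i) atTop (nhds (M i i)))
      simp only [Matrix.transpose_apply]
      rw [h3, hMdiag i]
    have hcol : ∀ a b, 0 < ∑ i, Ωᵀ i a * Ωᵀ i b := by
      intro a b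
      simpa [Matrix.transpose_apply] using hQpos a b
    exact Xzero (helper_zero M Ωᵀ hMnn (fun a b => hΩ0 b a) hdiag hcol)
end

section
/- Let A be an n×n row-stochastic matrix whose state transition diagram has communicating classes C₀,…,C_{s−1} with s > 1 partitioning {1,…,n} (i.e., A is reducible with no transient states: A_{ij} > 0 implies i and j lie in the same class). Define X ∈ ℚ^{C(n,2)} by x_{ij} = 0 if i and j lie in the same class C_k, and x_{ij} = 1 otherwise. Then A^{∨2}·Xᵀ = Xᵀ; in particular det(I − A^{∨2}) = 0. -/
open Matrix BigOperators Filter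

theorem stmt14 {n s : ℕ} (hs : 1 < s) (A : Matrix (Fin n) (Fin n) ℚ)
    (hA0 : ∀ i j, 0 ≤ A i j) (hA1 : ∀ i, ∑ j, A i j = 1)
    (c : Fin n → Fin s) (hc : Function.Surjective c)
    (hclosed : ∀ i j, c i ≠ c j → A i j = 0)
    (X : Pairs n → ℚ)
    (hX : ∀ I : Pairs n, X I = if c I.1.1 = c I.1.2 then 0 else 1) :
    zeonSq A *ᵥ X = X ∧ (1 - zeonSq A).det = 0 := by
  classical
  have key : zeonSq A *ᵥ X = X := by
    funext I
    obtain ⟨⟨i, j⟩, hij⟩ := I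
    set f : Fin n × Fin n → ℚ :=
      fun p => A i p.1 * A j p.2 * (if c p.1 = c p.2 then 0 else 1) with hf
    -- pointwise rewriting using closedness
    have hpt : ∀ p : Fin n × Fin n,
        f p = A i p.1 * A j p.2 * (if c i = c j then 0 else 1) := by
      intro p
      rcases eq_or_ne (A i p.1) 0 with h | h
      · simp [hf, h]
      rcases eq_or_ne (A j p.2) 0 with h' | h'
      · simp [hf, h']
      have hk : c i = c p.1 := by
        by_contra hcc; exact h (hclosed i p.1 hcc)
      have hl : c j = c p.2 := by
        by_contra hcc; exact h' (hclosed j p.2 hcc)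
      show A i p.1 * A j p.2 * (if c p.1 = c p.2 then (0:ℚ) else 1)
          = A i p.1 * A j p.2 * (if c i = c j then (0:ℚ) else 1)
      rw [← hk, ← hl]
    -- total sum over all pairs
    have htot : ∑ p : Fin n × Fin n, f p = (if c i = c j then 0 else 1) := by
      calc ∑ p : Fin n × Fin n, f p
          = ∑ p : Fin n × Fin n, A i p.1 * A j p.2 * (if c i = c j then 0 else 1) :=
            Finset.sum_congr rfl fun p _ => hpt p
        _ = (if c i = c j then 0 else 1) := by
            rw [Fintype.sum_prod_type]
            simp_rw [mul_assoc, ← Finset.mul_sum, ← Finset.sum_mul, hA1, one_mul]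
    -- split total sum into lower and upper triangular parts
    have hzero_diag : ∀ p : Fin n × Fin n, p.1 = p.2 → f p = 0 := by
      intro p hp; simp [hf, hp]
    have hswap : ∑ p ∈ Finset.univ.filter (fun p : Fin n × Fin n => p.1 < p.2), f p.swap
        = ∑ p ∈ Finset.univ.filter (fun p : Fin n × Fin n => p.2 < p.1), f p := by
      refine Finset.sum_equiv (Equiv.prodComm (Fin n) (Fin n)) ?_ ?_
      · intro p; simp [Equiv.prodComm]
      · intro p _; rfl
    have hsplit : ∑ p : Fin n × Fin n, f p
        = ∑ p ∈ Finset.univ.filter (fun p : Fin n × Fin n => p.1 < p.2), (f p + f p.swap) := by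
      rw [Finset.sum_add_distrib, hswap]
      rw [← Finset.sum_filter_add_sum_filter_not Finset.univ
        (fun p : Fin n × Fin n => p.1 < p.2) f]
      congr 1
      rw [← Finset.sum_filter_add_sum_filter_not
        (Finset.univ.filter (fun p : Fin n × Fin n => ¬ p.1 < p.2))
        (fun p : Fin n × Fin n => p.2 < p.1) f]
      have h2 : ∑ p ∈ (Finset.univ.filter (fun p : Fin n × Fin n => ¬ p.1 < p.2)).filter
          (fun p : Fin n × Fin n => ¬ p.2 < p.1), f p = 0 := by
        refine Finset.sum_eq_zero ?_
        intro p hp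
        simp only [Finset.mem_filter, Finset.mem_univ, true_and] at hp
        exact hzero_diag p (le_antisymm (le_of_not_gt hp.2) (le_of_not_gt hp.1))
      rw [h2, add_zero]
      congr 1
      rw [Finset.filter_filter]
      apply Finset.filter_congr
      intro p _
      constructor
      · intro h; exact h.2
      · intro h; exact ⟨not_lt_of_gt h, h⟩
    -- the sum over Pairs equals the filtered sum
    have hsum_pairs : ∀ g : Fin n × Fin n → ℚ,
        ∑ J : Pairs n, g J.1
          = ∑ p ∈ Finset.univ.filter (fun p : Fin n × Fin n => p.1 < p.2), g p := by
      intro g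
      exact (Finset.sum_subtype (p := fun p : Fin n × Fin n => p.1 < p.2)
        (Finset.univ.filter (fun p : Fin n × Fin n => p.1 < p.2)) (by intro p; simp) g).symm
    -- main computation
    show ∑ J : Pairs n, zeonSq A ⟨(i, j), hij⟩ J * X J = X ⟨(i, j), hij⟩
    have hterm : ∀ J : Pairs n,
        zeonSq A ⟨(i, j), hij⟩ J * X J = f J.1 + f J.1.swap := by
      intro J
      rw [hX J, zeonSq]
      have hsym : (if c J.1.2 = c J.1.1 then (0 : ℚ) else 1)
          = (if c J.1.1 = c J.1.2 then (0 : ℚ) else 1) := by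
        simp [eq_comm]
      simp only [Matrix.of_apply, hf, Prod.fst_swap, Prod.snd_swap, hsym]
      ring
    calc ∑ J : Pairs n, zeonSq A ⟨(i, j), hij⟩ J * X J
        = ∑ J : Pairs n, (f J.1 + f J.1.swap) := Finset.sum_congr rfl fun J _ => hterm J
      _ = ∑ p ∈ Finset.univ.filter (fun p : Fin n × Fin n => p.1 < p.2), (f p + f p.swap) :=
          hsum_pairs (fun p => f p + f p.swap)
      _ = ∑ p : Fin n × Fin n, f p := hsplit.symm
      _ = (if c i = c j then 0 else 1) := htot
      _ = X ⟨(i, j), hij⟩ := (hX ⟨(i, j), hij⟩).symm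
  refine ⟨key, ?_⟩
  have hker : (1 - zeonSq A) *ᵥ X = 0 := by
    rw [Matrix.sub_mulVec, Matrix.one_mulVec, key, sub_self]
  have hXne : X ≠ 0 := by
    obtain ⟨i, hi⟩ := hc ⟨0, by omega⟩
    obtain ⟨j, hj⟩ := hc ⟨1, hs⟩
    have hcij : c i ≠ c j := by
      rw [hi, hj]; simp [Fin.ext_iff]
    have hne : i ≠ j := fun h => hcij (by rw [h])
    intro h0
    rcases hne.lt_or_gt with h | h
    · have := congrFun h0 ⟨(i, j), h⟩
      rw [hX] at this; simp [hcij] at this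
    · have := congrFun h0 ⟨(j, i), h⟩
      rw [hX] at this; simp [Ne.symm hcij] at this
  rw [← Matrix.exists_mulVec_eq_zero_iff]
  exact ⟨X, hXne, hker⟩
end

section
/- Let A be an n×n row-stochastic matrix that is irreducible with period p > 1, with cyclic classes C₀,…,C_{p−1} (A_{ij} > 0 and i ∈ C_k implies j ∈ C_{k+1 mod p}). Define X ∈ ℚ^{C(n,2)} by x_{ij} = 1 if i and j lie in consecutive classes (i ∈ C_k and j ∈ C_{k±1 mod p}) and x_{ij} = 0 otherwise. Then A^{∨2}·Xᵀ = Xᵀ; in particular det(I − A^{∨2}) = 0. -/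
open Matrix BigOperators Filter

set_option maxHeartbeats 1000000 in
/-- Sum over all ordered pairs equals sum over unordered pairs of both orders,
when the diagonal vanishes. -/
lemma pairsum {n : ℕ} (h : Fin n → Fin n → ℚ) (hd : ∀ j, h j j = 0) :
    ∑ J : Pairs n, (h J.1.1 J.1.2 + h J.1.2 J.1.1) = ∑ j, ∑ k, h j k := by
  have hR : ∑ x : Fin n × Fin n, h x.1 x.2 = ∑ j, ∑ k, h j k :=
    Fintype.sum_prod_type _
  rw [← hR]
  have e1 : ∑ J : Pairs n, h J.1.1 J.1.2
      = ∑ x ∈ Finset.univ.filter (fun x : Fin n × Fin n => x.1 < x.2), h x.1 x.2 :=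
    (Finset.sum_subtype (p := fun x : Fin n × Fin n => x.1 < x.2)
      (Finset.univ.filter (fun x : Fin n × Fin n => x.1 < x.2)) (by simp)
      (fun x : Fin n × Fin n => h x.1 x.2)).symm
  have e2a : ∑ J : Pairs n, h J.1.2 J.1.1
      = ∑ x ∈ Finset.univ.filter (fun x : Fin n × Fin n => x.1 < x.2), h x.2 x.1 :=
    (Finset.sum_subtype (p := fun x : Fin n × Fin n => x.1 < x.2)
      (Finset.univ.filter (fun x : Fin n × Fin n => x.1 < x.2)) (by simp)
      (fun x => h x.2 x.1)).symm
  have e2 : ∑ J : Pairs n, h J.1.2 J.1.1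
      = ∑ x ∈ Finset.univ.filter (fun x : Fin n × Fin n => x.2 < x.1), h x.1 x.2 := by
    rw [e2a]
    exact Finset.sum_nbij' Prod.swap Prod.swap (by simp) (by simp) (by simp) (by simp)
      (by simp)
  rw [Finset.sum_add_distrib, e1, e2]
  rw [← Finset.sum_filter_add_sum_filter_not Finset.univ
    (fun x : Fin n × Fin n => x.1 < x.2) (fun x => h x.1 x.2)]
  congr 1
  rw [← Finset.sum_filter_add_sum_filter_not
    (Finset.univ.filter (fun x : Fin n × Fin n => ¬ x.1 < x.2))
    (fun x : Fin n × Fin n => x.2 < x.1) (fun x => h x.1 x.2)]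
  have hz : ∑ x ∈ (Finset.univ.filter (fun x : Fin n × Fin n => ¬ x.1 < x.2)).filter
      (fun x : Fin n × Fin n => ¬ x.2 < x.1), h x.1 x.2 = 0 := by
    apply Finset.sum_eq_zero
    intro x hx
    simp only [Finset.mem_filter] at hx
    have : x.1 = x.2 := le_antisymm (not_lt.mp hx.2) (not_lt.mp hx.1.2)
    rw [this]; exact hd _
  rw [hz, add_zero]
  congr 1
  ext x
  simp only [Finset.mem_filter, Finset.mem_univ, true_and]
  constructor
  · intro hx; exact ⟨asymm hx, hx⟩
  · intro hx; exact hx.2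

theorem stmt15 {n p : ℕ} (hn : 0 < n) (hp : 1 < p)
    (A : Matrix (Fin n) (Fin n) ℚ)
    (hA0 : ∀ i j, 0 ≤ A i j) (hA1 : ∀ i, ∑ j, A i j = 1)
    (hirr : ∀ i j, ∃ m, 0 < (A ^ m) i j)
    (c : Fin n → ZMod p)
    (hcyc : ∀ i j, 0 < A i j → c j = c i + 1)
    (X : Pairs n → ℚ)
    (hX : ∀ I : Pairs n,
      X I = if c I.1.2 = c I.1.1 + 1 ∨ c I.1.1 = c I.1.2 + 1 then 1 else 0) :
    zeonSq A *ᵥ X = X ∧ (1 - zeonSq A).det = 0 := by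
  haveI : Fact (1 < p) := ⟨hp⟩
  have hone : (1 : ZMod p) ≠ 0 := one_ne_zero
  have hself : ∀ x : ZMod p, x ≠ x + 1 := by
    intro x hx
    apply hone
    have h0 : x + 0 = x + 1 := by rw [add_zero]; exact hx
    exact (add_left_cancel h0).symm
  set F : Fin n → Fin n → ℚ :=
    fun j k => if c k = c j + 1 ∨ c j = c k + 1 then 1 else 0 with hF
  have hFdiag : ∀ j, F j j = 0 := by
    intro j
    simp only [hF]
    rw [if_neg]
    rintro (h | h) <;> exact hself (c j) h
  have hFsymm : ∀ j k, F j k = F k j := by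
    intro j k; simp only [hF, or_comm]
  have hXF : ∀ I : Pairs n, X I = F I.1.1 I.1.2 := fun I => hX I
  have key : ∀ i1 i2 j k, A i1 j * A i2 k * F j k = A i1 j * A i2 k * F i1 i2 := by
    intro i1 i2 j k
    rcases eq_or_lt_of_le (hA0 i1 j) with h1 | h1
    · rw [← h1]; ring
    rcases eq_or_lt_of_le (hA0 i2 k) with h2 | h2
    · rw [← h2]; ring
    have hj := hcyc i1 j h1
    have hk := hcyc i2 k h2
    have : F j k = F i1 i2 := by
      simp only [hF, hj, hk, add_left_inj]
    rw [this]
  have keysum : ∀ i1 i2, ∑ j, ∑ k, A i1 j * A i2 k * F j k = F i1 i2 := by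
    intro i1 i2
    calc ∑ j, ∑ k, A i1 j * A i2 k * F j k
        = ∑ j, ∑ k, A i1 j * A i2 k * F i1 i2 := by
          exact Finset.sum_congr rfl fun j _ => Finset.sum_congr rfl fun k _ => key i1 i2 j k
      _ = ((∑ j, A i1 j) * (∑ k, A i2 k)) * F i1 i2 := by
          rw [Finset.sum_mul_sum]
          rw [Finset.sum_mul]
          exact Finset.sum_congr rfl fun j _ => by rw [Finset.sum_mul]
      _ = F i1 i2 := by rw [hA1, hA1]; ring
  have hfix : zeonSq A *ᵥ X = X := by
    funext I
    obtain ⟨⟨i1, i2⟩, hI⟩ := I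
    show ∑ J : Pairs n, zeonSq A ⟨(i1, i2), hI⟩ J * X J = X ⟨(i1, i2), hI⟩
    have : ∀ J : Pairs n, zeonSq A ⟨(i1, i2), hI⟩ J * X J
        = (A i1 J.1.1 * A i2 J.1.2 * F J.1.1 J.1.2
          + A i1 J.1.2 * A i2 J.1.1 * F J.1.2 J.1.1) := by
      intro J
      rw [hXF J]
      show (A i1 J.1.1 * A i2 J.1.2 + A i1 J.1.2 * A i2 J.1.1) * F J.1.1 J.1.2 = _
      rw [hFsymm J.1.2 J.1.1]; ring
    rw [Finset.sum_congr rfl fun J _ => this J]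
    rw [pairsum (fun j k => A i1 j * A i2 k * F j k) (fun j => by simp [hFdiag j])]
    rw [keysum i1 i2, hXF]
  refine ⟨hfix, ?_⟩
  -- find a nonzero entry of X
  obtain ⟨i0, hi0⟩ : ∃ i0 : Fin n, True := ⟨⟨0, hn⟩, trivial⟩
  have : ∃ j, A i0 j ≠ 0 := by
    by_contra hc
    push_neg at hc
    have := hA1 i0
    rw [Finset.sum_eq_zero (fun j _ => hc j)] at this
    norm_num at this
  obtain ⟨j0, hj0⟩ := this
  have hj0pos : 0 < A i0 j0 := lt_of_le_of_ne (hA0 i0 j0) (Ne.symm hj0)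
  have hcj : c j0 = c i0 + 1 := hcyc i0 j0 hj0pos
  have hne : i0 ≠ j0 := by
    intro h
    rw [h] at hcj
    exact hself (c j0) hcj
  have hXne : X ≠ 0 := by
    rcases lt_or_gt_of_ne hne with h | h
    · intro hc
      have := hX ⟨(i0, j0), h⟩
      rw [if_pos (Or.inl hcj)] at this
      rw [hc] at this
      norm_num at this
    · intro hc
      have := hX ⟨(j0, i0), h⟩
      rw [if_pos (Or.inr hcj)] at this
      rw [hc] at this
      norm_num at this
  rw [← Matrix.exists_mulVec_eq_zero_iff]
  exact ⟨X, hXne, by rw [sub_mulVec, one_mulVec, hfix, sub_self]⟩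
end

section
/- If A is an n×n row-stochastic matrix, then every nonnegative eigenvalue λ of A^{∨2} possessing a nonnegative eigenvector X ≠ 0 (with X·A^{∨2} = λX) satisfies λ ≤ 1. -/
open Matrix BigOperators Filter

lemma rowsum_le {n : ℕ} (A : Matrix (Fin n) (Fin n) ℚ)
    (hA0 : ∀ i j, 0 ≤ A i j) (hA1 : ∀ i, ∑ j, A i j = 1)
    (I : Pairs n) : ∑ J : Pairs n, zeonSq A I J ≤ 1 := by
  obtain ⟨⟨i, j⟩, hij⟩ := I
  have htot : ∑ p : Fin n × Fin n, A i p.1 * A j p.2 = 1 := by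
    rw [Fintype.sum_prod_type]
    simp only [← Finset.sum_mul, ← Finset.mul_sum, hA1]
    simp [hA1]
  have hsplit : (Finset.univ : Finset (Fin n × Fin n)) =
      (Finset.univ.filter (fun p : Fin n × Fin n => p.1 < p.2)) ∪
      ((Finset.univ.filter (fun p : Fin n × Fin n => p.2 < p.1)) ∪
       (Finset.univ.filter (fun p : Fin n × Fin n => p.1 = p.2))) := by
    ext p
    simp [lt_trichotomy p.1 p.2]
    rcases lt_trichotomy p.1 p.2 with h | h | h <;> tauto
  have hdisj1 : Disjoint (Finset.univ.filter (fun p : Fin n × Fin n => p.1 < p.2))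
      ((Finset.univ.filter (fun p : Fin n × Fin n => p.2 < p.1)) ∪
       (Finset.univ.filter (fun p : Fin n × Fin n => p.1 = p.2))) := by
    rw [Finset.disjoint_left]
    intro p hp hq
    simp only [Finset.mem_filter, Finset.mem_union, Finset.mem_univ, true_and] at hp hq
    rcases hq with h | h
    · exact absurd hp (asymm h)
    · exact absurd hp (h ▸ lt_irrefl _)
  have hdisj2 : Disjoint (Finset.univ.filter (fun p : Fin n × Fin n => p.2 < p.1))
      (Finset.univ.filter (fun p : Fin n × Fin n => p.1 = p.2)) := by
    rw [Finset.disjoint_left]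
    intro p hp hq
    simp only [Finset.mem_filter, Finset.mem_univ, true_and] at hp hq
    exact absurd hp (hq ▸ lt_irrefl _)
  have hsum := htot
  rw [hsplit, Finset.sum_union hdisj1, Finset.sum_union hdisj2] at hsum
  -- swap bijection for the > part
  have hswap : ∑ p ∈ Finset.univ.filter (fun p : Fin n × Fin n => p.2 < p.1),
      A i p.1 * A j p.2
      = ∑ p ∈ Finset.univ.filter (fun p : Fin n × Fin n => p.1 < p.2),
      A i p.2 * A j p.1 := by
    apply Finset.sum_nbij' (fun p => Prod.swap p) (fun p => Prod.swap p) <;>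
      simp [Prod.swap]
  have hsub : ∑ J : Pairs n, zeonSq A ⟨(i, j), hij⟩ J
      = ∑ p ∈ Finset.univ.filter (fun p : Fin n × Fin n => p.1 < p.2),
        (A i p.1 * A j p.2 + A i p.2 * A j p.1) := by
    rw [Finset.sum_subtype (p := fun p : Fin n × Fin n => p.1 < p.2)
      (Finset.univ.filter (fun p : Fin n × Fin n => p.1 < p.2))
      (fun x => by simp) (fun p => A i p.1 * A j p.2 + A i p.2 * A j p.1)]
    rfl
  have hdiag : 0 ≤ ∑ p ∈ Finset.univ.filter (fun p : Fin n × Fin n => p.1 = p.2),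
      A i p.1 * A j p.2 :=
    Finset.sum_nonneg fun p _ => mul_nonneg (hA0 _ _) (hA0 _ _)
  rw [hsub, Finset.sum_add_distrib]
  rw [hswap] at hsum
  linarith

theorem stmt16 {n : ℕ} (A : Matrix (Fin n) (Fin n) ℚ)
    (hA0 : ∀ i j, 0 ≤ A i j) (hA1 : ∀ i, ∑ j, A i j = 1)
    (lam : ℚ) (hlam : 0 ≤ lam)
    (X : Pairs n → ℚ) (hX : ∀ I, 0 ≤ X I) (hX0 : X ≠ 0)
    (heig : X ᵥ* zeonSq A = lam • X) :
    lam ≤ 1 := by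
  set S : ℚ := ∑ I : Pairs n, X I with hS
  have hSpos : 0 < S := by
    obtain ⟨I, hI⟩ : ∃ I, X I ≠ 0 := by
      by_contra h
      push_neg at h
      exact hX0 (funext h)
    exact Finset.sum_pos' (fun J _ => hX J) ⟨I, Finset.mem_univ I, (hX I).lt_of_ne (Ne.symm hI)⟩
  have hkey : lam * S ≤ S := by
    have h1 : ∑ J : Pairs n, (X ᵥ* zeonSq A) J = lam * S := by
      rw [heig]
      simp [hS, Finset.mul_sum]
    have h2 : ∑ J : Pairs n, (X ᵥ* zeonSq A) J
        = ∑ I : Pairs n, X I * ∑ J : Pairs n, zeonSq A I J := by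
      simp only [Matrix.vecMul, dotProduct, Finset.mul_sum]
      rw [Finset.sum_comm]
    have h3 : ∑ I : Pairs n, X I * ∑ J : Pairs n, zeonSq A I J ≤ S := by
      rw [hS]
      apply Finset.sum_le_sum
      intro I _
      have := rowsum_le A hA0 hA1 I
      nlinarith [hX I]
    linarith
  nlinarith
end

section
/- Let A be an n×n row-stochastic, irreducible and aperiodic matrix (equivalently: some power Aᵐ has all positive entries). Then det(I − A^{∨2}) ≠ 0, i.e., 1 is not an eigenvalue of the zeon square A^{∨2}. -/
open Matrix BigOperators Filter

open Kronecker

/-- Auxiliary: the "off-diagonal Kronecker square" of `A`. -/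
def offK {n : ℕ} (A : Matrix (Fin n) (Fin n) ℚ) :
    Matrix (Fin n × Fin n) (Fin n × Fin n) ℚ :=
  Matrix.of fun p q => if p.1 ≠ p.2 ∧ q.1 ≠ q.2 then A p.1 q.1 * A p.2 q.2 else 0

private lemma kron_pow {n : ℕ} (A : Matrix (Fin n) (Fin n) ℚ) (m : ℕ) :
    (A ⊗ₖ A) ^ m = (A ^ m) ⊗ₖ (A ^ m) := by
  induction m with
  | zero => simp [Matrix.one_kronecker_one]
  | succ k ih => rw [pow_succ, pow_succ, ih, ← Matrix.mul_kronecker_mul, ← pow_succ]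

private lemma pow_entry_le {ι : Type*} [Fintype ι] [DecidableEq ι] {C D : Matrix ι ι ℚ}
    (hC : ∀ p q, 0 ≤ C p q) (hCD : ∀ p q, C p q ≤ D p q) (m : ℕ) :
    ∀ p q, 0 ≤ (C ^ m) p q ∧ (C ^ m) p q ≤ (D ^ m) p q := by
  induction m with
  | zero =>
    intro p q
    rw [pow_zero]
    refine ⟨?_, le_refl _⟩
    rw [Matrix.one_apply]; split <;> norm_num
  | succ k ih =>
    intro p q
    rw [pow_succ, pow_succ, Matrix.mul_apply, Matrix.mul_apply]
    constructor
    · exact Finset.sum_nonneg fun r _ => mul_nonneg (ih p r).1 (hC r q)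
    · exact Finset.sum_le_sum fun r _ =>
        mul_le_mul (ih p r).2 (hCD r q) (hC r q) ((ih p r).1.trans (ih p r).2)

private lemma pow_row_sum {n : ℕ} (A : Matrix (Fin n) (Fin n) ℚ)
    (hA1 : ∀ i, ∑ j, A i j = 1) (m : ℕ) : ∀ i, ∑ j, (A ^ m) i j = 1 := by
  induction m with
  | zero => intro i; simp [Matrix.one_apply]
  | succ k ih =>
    intro i
    simp only [pow_succ, Matrix.mul_apply]
    rw [Finset.sum_comm]
    simp_rw [← Finset.mul_sum, hA1, mul_one]
    exact ih i

private lemma pow_fixed {ι : Type*} [Fintype ι] [DecidableEq ι] (C : Matrix ι ι ℚ)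
    (w : ι → ℚ) (h : C *ᵥ w = w) (m : ℕ) : C ^ m *ᵥ w = w := by
  induction m with
  | zero => simp
  | succ k ih => rw [pow_succ, ← Matrix.mulVec_mulVec, h, ih]

private lemma sum_offdiag {n : ℕ} (f : Fin n × Fin n → ℚ) (hd : ∀ i, f (i, i) = 0) :
    ∑ q : Fin n × Fin n, f q = ∑ I : Pairs n, (f I.1 + f (I.1.2, I.1.1)) := by
  have h1 : ∑ I : Pairs n, f I.1
      = ∑ q ∈ Finset.univ.filter (fun q : Fin n × Fin n => q.1 < q.2), f q :=
    (Finset.sum_subtype _ (by simp) f).symm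
  have h2 : ∑ I : Pairs n, f (I.1.2, I.1.1)
      = ∑ q ∈ Finset.univ.filter (fun q : Fin n × Fin n => q.1 < q.2), f (q.2, q.1) :=
    (Finset.sum_subtype _ (by simp) (fun q : Fin n × Fin n => f (q.2, q.1))).symm
  have h3 : ∑ q ∈ Finset.univ.filter (fun q : Fin n × Fin n => q.1 < q.2), f (q.2, q.1)
      = ∑ q ∈ Finset.univ.filter (fun q : Fin n × Fin n => q.2 < q.1), f q := by
    apply Finset.sum_nbij' (fun q => (q.2, q.1)) (fun q => (q.2, q.1)) <;> simp
  have h4 : ∑ q ∈ Finset.univ.filter (fun q : Fin n × Fin n => q.2 < q.1), f q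
      = ∑ q ∈ Finset.univ.filter (fun q : Fin n × Fin n => ¬ q.1 < q.2), f q := by
    apply Finset.sum_subset
    · intro q hq
      simp only [Finset.mem_filter, Finset.mem_univ, true_and] at hq ⊢
      exact asymm hq
    · intro q hq hq'
      simp only [Finset.mem_filter, Finset.mem_univ, true_and] at hq hq'
      have : q.1 = q.2 := le_antisymm (not_lt.mp hq') (not_lt.mp hq)
      calc f q = f (q.1, q.1) := by rw [show q = (q.1, q.1) from Prod.ext rfl this.symm]
      _ = 0 := hd q.1
  rw [Finset.sum_add_distrib, h1, h2, h3, h4,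
    Finset.sum_filter_add_sum_filter_not]

private lemma offK_fixed {n : ℕ} (A : Matrix (Fin n) (Fin n) ℚ) (v : Pairs n → ℚ)
    (hv : zeonSq A *ᵥ v = v) :
    offK A *ᵥ (fun p : Fin n × Fin n => matOf v p.1 p.2) = fun p => matOf v p.1 p.2 := by
  funext p
  show ∑ q, offK A p q * matOf v q.1 q.2 = matOf v p.1 p.2
  by_cases hp : p.1 = p.2
  · rw [Finset.sum_eq_zero (fun q _ => by simp [offK, hp])]
    simp [matOf, hp]
  · rw [sum_offdiag (fun q => offK A p q * matOf v q.1 q.2)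
      (fun k => by simp [offK])]
    have hz : ∀ J : Pairs n,
        offK A p (J.1.1, J.1.2) * matOf v J.1.1 J.1.2
          + offK A p (J.1.2, J.1.1) * matOf v J.1.2 J.1.1
        = (A p.1 J.1.1 * A p.2 J.1.2 + A p.1 J.1.2 * A p.2 J.1.1) * v J := by
      intro J
      have hJ : J.1.1 < J.1.2 := J.2
      have hJ' : ¬ J.1.2 < J.1.1 := asymm hJ
      have hJne : J.1.1 ≠ J.1.2 := ne_of_lt hJ
      simp only [offK, matOf, Matrix.of_apply, hp, hJne, hJne.symm, ne_eq,
        not_false_iff, and_self, if_true, hJ, hJ', dif_pos, dif_neg, dite_true, dite_false]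
      rw [show (⟨(J.1.1, J.1.2), hJ⟩ : Pairs n) = J from Subtype.ext (Prod.ext rfl rfl)]
      ring
    have hcongr : ∀ J : Pairs n,
        offK A p J.1 * matOf v J.1.1 J.1.2 + offK A p (J.1.2, J.1.1) * matOf v J.1.2 J.1.1
        = (A p.1 J.1.1 * A p.2 J.1.2 + A p.1 J.1.2 * A p.2 J.1.1) * v J := by
      intro J
      have := hz J
      rwa [show ((J.1.1 : Fin n), J.1.2) = J.1 from Prod.ext rfl rfl] at this
    rw [Finset.sum_congr rfl (fun J _ => hcongr J)]
    rcases lt_or_gt_of_ne hp with h | h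
    · have h2 := congrFun hv ⟨(p.1, p.2), h⟩
      simp only [Matrix.mulVec, dotProduct, zeonSq, Matrix.of_apply] at h2
      simp only [matOf, Matrix.of_apply, dif_pos h]
      exact h2
    · have h2 := congrFun hv ⟨(p.2, p.1), h⟩
      simp only [Matrix.mulVec, dotProduct, zeonSq, Matrix.of_apply] at h2
      simp only [matOf, Matrix.of_apply, dif_neg (asymm h), dif_pos h]
      rw [← h2]
      exact Finset.sum_congr rfl fun J _ => by ring

theorem stmt17 {n : ℕ} (A : Matrix (Fin n) (Fin n) ℚ)
    (hA0 : ∀ i j, 0 ≤ A i j) (hA1 : ∀ i, ∑ j, A i j = 1)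
    (hqp : ∃ m, ∀ i j, 0 < (A ^ m) i j) :
    (1 - zeonSq A).det ≠ 0 := by
  rcases isEmpty_or_nonempty (Pairs n) with hE | hne
  · simp [Matrix.det_isEmpty]
  intro hdet
  obtain ⟨v, hv0, hveq⟩ := Matrix.exists_mulVec_eq_zero_iff.mpr hdet
  have hv : zeonSq A *ᵥ v = v := by
    have h := hveq
    rw [Matrix.sub_mulVec, Matrix.one_mulVec, sub_eq_zero] at h
    exact h.symm
  obtain ⟨I0⟩ := hne
  obtain ⟨m, hm⟩ := hqp
  have hij : I0.1.1 ≠ I0.1.2 := ne_of_lt I0.2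
  have hm1 : m ≠ 0 := by
    rintro rfl
    have h := hm I0.1.1 I0.1.2
    rw [pow_zero, Matrix.one_apply_ne hij] at h
    exact lt_irrefl 0 h
  have : Nonempty (Fin n) := ⟨I0.1.1⟩
  set w : Fin n × Fin n → ℚ := fun p => matOf v p.1 p.2 with hw
  have hfix : offK A *ᵥ w = w := offK_fixed A v hv
  have hfixm : (offK A) ^ m *ᵥ w = w := pow_fixed _ _ hfix m
  set B : Matrix (Fin n × Fin n) (Fin n × Fin n) ℚ := (offK A) ^ m with hB
  -- entrywise bounds
  have hC0 : ∀ p q, 0 ≤ offK A p q := by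
    intro p q
    simp only [offK, Matrix.of_apply]
    split
    · exact mul_nonneg (hA0 _ _) (hA0 _ _)
    · exact le_refl 0
  have hCD : ∀ p q, offK A p q ≤ (A ⊗ₖ A) p q := by
    intro p q
    simp only [offK, Matrix.of_apply, Matrix.kroneckerMap_apply]
    split
    · exact le_refl _
    · exact mul_nonneg (hA0 _ _) (hA0 _ _)
  have hPE := pow_entry_le hC0 hCD m
  have hB0 : ∀ p q, 0 ≤ B p q := fun p q => (hPE p q).1
  have hBle : ∀ p q, B p q ≤ (A ^ m) p.1 q.1 * (A ^ m) p.2 q.2 := by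
    intro p q
    have := (hPE p q).2
    rwa [kron_pow, Matrix.kroneckerMap_apply] at this
  have hBcol : ∀ p (k : Fin n), B p (k, k) = 0 := by
    intro p k
    obtain ⟨t, rfl⟩ := Nat.exists_eq_succ_of_ne_zero hm1
    rw [hB, pow_succ, Matrix.mul_apply]
    exact Finset.sum_eq_zero fun r _ => by simp [offK]
  -- max entry
  obtain ⟨p₀, hp₀⟩ := Finite.exists_max (fun p : Fin n × Fin n => |w p|)
  have hM : 0 < |w p₀| := by
    rcases lt_or_ge 0 (|w p₀|) with h | h
    · exact h
    exfalso
    apply hv0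
    funext J
    have hJ : |w J.1| = 0 := le_antisymm ((hp₀ J.1).trans h) (abs_nonneg _)
    have : w J.1 = 0 := abs_eq_zero.mp hJ
    have hJlt : J.1.1 < J.1.2 := J.2
    simp only [hw, matOf, Matrix.of_apply, dif_pos hJlt] at this
    rwa [show (⟨(J.1.1, J.1.2), hJlt⟩ : Pairs n) = J from Subtype.ext (Prod.ext rfl rfl)]
      at this
  -- the row sum of B at p₀ is < 1
  have hpow1 := pow_row_sum A hA1 m
  have hS : ∑ q : Fin n × Fin n, B p₀ q < 1 := by
    have hle : ∀ q : Fin n × Fin n,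
        B p₀ q ≤ (A ^ m) p₀.1 q.1 * (A ^ m) p₀.2 q.2
          - (if q.1 = q.2 then (A ^ m) p₀.1 q.1 * (A ^ m) p₀.2 q.2 else 0) := by
      intro q
      by_cases hq : q.1 = q.2
      · rw [if_pos hq]
        have : B p₀ q = 0 := by
          rw [show q = (q.1, q.1) from Prod.ext rfl hq.symm]
          exact hBcol p₀ q.1
        rw [this]; ring_nf; exact le_refl 0
      · rw [if_neg hq, sub_zero]
        exact hBle p₀ q
    calc ∑ q : Fin n × Fin n, B p₀ q
        ≤ ∑ q : Fin n × Fin n, ((A ^ m) p₀.1 q.1 * (A ^ m) p₀.2 q.2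
          - (if q.1 = q.2 then (A ^ m) p₀.1 q.1 * (A ^ m) p₀.2 q.2 else 0)) :=
          Finset.sum_le_sum fun q _ => hle q
      _ = (∑ q : Fin n × Fin n, (A ^ m) p₀.1 q.1 * (A ^ m) p₀.2 q.2)
          - ∑ q : Fin n × Fin n,
              (if q.1 = q.2 then (A ^ m) p₀.1 q.1 * (A ^ m) p₀.2 q.2 else 0) :=
          Finset.sum_sub_distrib _ _
      _ = 1 - ∑ k : Fin n, (A ^ m) p₀.1 k * (A ^ m) p₀.2 k := by
          congr 1
          · rw [Fintype.sum_prod_type]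
            simp_rw [← Finset.mul_sum, hpow1, mul_one]
            exact hpow1 p₀.1
          · rw [Fintype.sum_prod_type]
            simp
      _ < 1 := by
          have hpos : 0 < ∑ k : Fin n, (A ^ m) p₀.1 k * (A ^ m) p₀.2 k :=
            Finset.sum_pos (fun k _ => mul_pos (hm _ _) (hm _ _)) Finset.univ_nonempty
          linarith
  -- contradiction via max norm
  have hkey : w p₀ = ∑ q, B p₀ q * w q := by
    have := congrFun hfixm p₀
    rw [← this]
    rfl
  have hchain : |w p₀| ≤ (∑ q : Fin n × Fin n, B p₀ q) * |w p₀| := by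
    calc |w p₀| = |∑ q, B p₀ q * w q| := by rw [hkey]
      _ ≤ ∑ q, |B p₀ q * w q| := Finset.abs_sum_le_sum_abs _ _
      _ = ∑ q, B p₀ q * |w q| := Finset.sum_congr rfl fun q _ => by
          rw [abs_mul, abs_of_nonneg (hB0 p₀ q)]
      _ ≤ ∑ q, B p₀ q * |w p₀| :=
          Finset.sum_le_sum fun q _ => mul_le_mul_of_nonneg_left (hp₀ q) (hB0 p₀ q)
      _ = (∑ q : Fin n × Fin n, B p₀ q) * |w p₀| := (Finset.sum_mul _ _ _).symm
  nlinarith [mul_pos (sub_pos.mpr hS) hM]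
end

section
/- Let A be an n×n row-stochastic matrix having a strictly positive left-invariant vector (πA = π with all πᵢ > 0) and no transient states. If det(I − A^{∨2}) ≠ 0, then A is irreducible and aperiodic; consequently the Markov chain with transition matrix A is ergodic. -/
open Matrix BigOperators Filter

namespace Stmt18Aux
variable {n : ℕ}

lemma pow_nn (A : Matrix (Fin n) (Fin n) ℝ) (hA0 : ∀ i j, 0 ≤ A i j) :
    ∀ m i j, 0 ≤ (A ^ m) i j := by
  intro m
  induction m with
  | zero =>
    intro i j
    by_cases h : i = j <;> simp [Matrix.one_apply, h]
  | succ m ih =>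
    intro i j
    rw [pow_succ, Matrix.mul_apply]
    exact Finset.sum_nonneg fun k _ => mul_nonneg (ih i k) (hA0 k j)

lemma pow_rowsum (A : Matrix (Fin n) (Fin n) ℝ) (hA1 : ∀ i, ∑ j, A i j = 1) :
    ∀ m i, ∑ j, (A ^ m) i j = 1 := by
  intro m
  induction m with
  | zero => intro i; simp [Matrix.one_apply]
  | succ m ih =>
    intro i
    simp only [pow_succ, Matrix.mul_apply]
    rw [Finset.sum_comm]
    calc ∑ k, ∑ j, (A ^ m) i k * A k j
        = ∑ k, (A ^ m) i k * ∑ j, A k j := by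
          simp [Finset.mul_sum]
      _ = 1 := by simp [hA1, ih]

lemma pow_entry_ge (A : Matrix (Fin n) (Fin n) ℝ) (hA0 : ∀ i j, 0 ≤ A i j)
    (a b : ℕ) (i k j : Fin n) :
    (A ^ a) i k * (A ^ b) k j ≤ (A ^ (a + b)) i j := by
  rw [pow_add, Matrix.mul_apply]
  exact Finset.single_le_sum
    (f := fun x => (A ^ a) i x * (A ^ b) x j)
    (fun x _ => mul_nonneg (pow_nn A hA0 a i x) (pow_nn A hA0 b x j))
    (Finset.mem_univ k)

lemma chain (A : Matrix (Fin n) (Fin n) ℝ) (hA0 : ∀ i j, 0 ≤ A i j)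
    {a b : ℕ} {i k j : Fin n} (h1 : 0 < (A ^ a) i k) (h2 : 0 < (A ^ b) k j) :
    0 < (A ^ (a + b)) i j :=
  lt_of_lt_of_le (mul_pos h1 h2) (pow_entry_ge A hA0 a b i k j)

lemma lemZ (A : Matrix (Fin n) (Fin n) ℝ) (hA0 : ∀ i j, 0 ≤ A i j)
    (pv : Fin n → ℝ) (hpv : ∀ i, 0 < pv i) (hinv : pv ᵥ* A = pv)
    (Q : Fin n → Fin n → Prop) (hsym : ∀ i j, Q i j → Q j i)
    (hirr : ∀ i, ¬ Q i i) (hne : ∃ i j, Q i j)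
    (hcompat : ∀ i j k l, 0 < A i k → 0 < A j l → (Q i j ↔ Q k l)) :
    (1 - zeonSq A).det = 0 := by
  classical
  set X : Pairs n → ℝ := fun I => if Q I.1.1 I.1.2 then pv I.1.1 * pv I.1.2 else 0 with hX
  have key : X ᵥ* zeonSq A = X := by
    funext J
    obtain ⟨⟨k, l⟩, hkl⟩ := J
    set g : Fin n × Fin n → ℝ :=
      fun p => (if Q p.1 p.2 then pv p.1 * pv p.2 else 0) * (A p.1 k * A p.2 l) with hg
    have hgd : ∀ p : Fin n × Fin n, p.1 = p.2 → g p = 0 := by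
      intro p h; simp [hg, h, hirr p.2]
    have step1 : (X ᵥ* zeonSq A) ⟨(k, l), hkl⟩
        = ∑ I : Pairs n, (g (I.1.1, I.1.2) + g (I.1.2, I.1.1)) := by
      rw [Matrix.vecMul]
      simp only [dotProduct]
      apply Finset.sum_congr rfl
      intro I _
      have hQiff : Q I.1.1 I.1.2 ↔ Q I.1.2 I.1.1 := ⟨hsym _ _, hsym _ _⟩
      simp only [hX, hg, zeonSq, Matrix.of_apply]
      rw [if_congr hQiff rfl rfl]
      by_cases h : Q I.1.2 I.1.1 <;> simp [h] <;> ring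
    have step2 : ∑ I : Pairs n, (g (I.1.1, I.1.2) + g (I.1.2, I.1.1))
        = ∑ p : Fin n × Fin n, g p := by
      have hsub : ∑ p ∈ Finset.univ.filter (fun p : Fin n × Fin n => p.1 < p.2),
            (g p + g p.swap)
          = ∑ I : Pairs n, (g (I.1.1, I.1.2) + g (I.1.2, I.1.1)) := by
        refine Finset.sum_subtype _ (fun x => by simp) (fun p => g p + g p.swap)
      rw [← hsub, Finset.sum_add_distrib]
      have hswap : ∑ p ∈ Finset.univ.filter (fun p : Fin n × Fin n => p.1 < p.2), g p.swap
          = ∑ p ∈ Finset.univ.filter (fun p : Fin n × Fin n => p.2 < p.1), g p := by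
        refine Finset.sum_nbij' (fun p => p.swap) (fun p => p.swap) ?_ ?_ ?_ ?_ ?_ <;>
          simp [Prod.swap]
      rw [hswap]
      rw [← Finset.sum_filter_add_sum_filter_not Finset.univ
        (fun p : Fin n × Fin n => p.1 < p.2) g]
      congr 1
      refine Finset.sum_subset ?_ ?_
      · intro p hp
        simp only [Finset.mem_filter, Finset.mem_univ, true_and] at hp ⊢
        exact lt_asymm hp
      · intro p hp hnp
        simp only [Finset.mem_filter, Finset.mem_univ, true_and, not_lt] at hp hnp
        exact hgd p (le_antisymm hnp hp)
    have hvm : ∀ x : Fin n, ∑ i, pv i * A i x = pv x := by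
      intro x
      have := congrFun hinv x
      simpa [Matrix.vecMul, dotProduct] using this
    rw [step1, step2, Fintype.sum_prod_type]
    by_cases hQkl : Q k l
    · have hterm : ∀ i j : Fin n,
          g (i, j) = (pv i * A i k) * (pv j * A j l) := by
        intro i j
        rcases eq_or_lt_of_le (hA0 i k) with h1 | h1
        · simp [hg, ← h1]
        rcases eq_or_lt_of_le (hA0 j l) with h2 | h2
        · simp [hg, ← h2]
        have : Q i j := (hcompat i j k l h1 h2).mpr hQkl
        simp only [hg, if_pos this]; ring
      simp only [hterm]
      rw [← Finset.sum_mul_sum]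
      simp only [hvm]
      simp [hX, if_pos hQkl]
    · have hterm : ∀ i j : Fin n, g (i, j) = 0 := by
        intro i j
        by_cases hQ : Q i j
        · rcases eq_or_lt_of_le (hA0 i k) with h1 | h1
          · simp [hg, ← h1]
          rcases eq_or_lt_of_le (hA0 j l) with h2 | h2
          · simp [hg, ← h2]
          exact absurd ((hcompat i j k l h1 h2).mp hQ) hQkl
        · simp [hg, hQ]
      simp [hterm, hX, hQkl]
  have hXne : X ≠ 0 := by
    obtain ⟨i, j, hQ⟩ := hne
    have hij : i ≠ j := fun h => hirr j (h ▸ hQ)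
    intro h0
    rcases hij.lt_or_gt with h | h
    · have := congrFun h0 ⟨(i, j), h⟩
      simp only [hX, Pi.zero_apply, if_pos hQ] at this
      exact absurd this (ne_of_gt (mul_pos (hpv i) (hpv j)))
    · have := congrFun h0 ⟨(j, i), h⟩
      simp only [hX, Pi.zero_apply, if_pos (hsym _ _ hQ)] at this
      exact absurd this (ne_of_gt (mul_pos (hpv j) (hpv i)))
  apply Matrix.exists_vecMul_eq_zero_iff.mp
  refine ⟨X, hXne, ?_⟩
  have h1 : X ᵥ* (1 - zeonSq A) = X ᵥ* (1 : Matrix (Pairs n) (Pairs n) ℝ) - X ᵥ* zeonSq A := by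
    funext x
    simp only [Matrix.vecMul, dotProduct, Matrix.sub_apply, mul_sub,
      Finset.sum_sub_distrib, Pi.sub_apply]
  rw [h1, Matrix.vecMul_one, key, sub_self]

end Stmt18Aux
namespace Stmt18Aux
variable {n : ℕ}

lemma irred_of_det (hn : 0 < n) (A : Matrix (Fin n) (Fin n) ℝ)
    (hA0 : ∀ i j, 0 ≤ A i j)
    (pv : Fin n → ℝ) (hpv : ∀ i, 0 < pv i) (hinv : pv ᵥ* A = pv)
    (hnotrans : ∀ i j, (∃ m, 0 < (A ^ m) i j) → ∃ m, 0 < (A ^ m) j i)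
    (hdet : (1 - zeonSq A).det ≠ 0) :
    ∀ i j, ∃ m, 0 < (A ^ m) i j := by
  classical
  by_contra hcon
  push_neg at hcon
  obtain ⟨i0, j0, hij0⟩ := hcon
  set R : Fin n → Fin n → Prop := fun i j => ∃ m, 0 < (A ^ m) i j with hR
  have hRrefl : ∀ i, R i i := fun i => ⟨0, by simp [Matrix.one_apply]⟩
  have hRtrans : ∀ {i j k}, R i j → R j k → R i k := by
    rintro i j k ⟨a, ha⟩ ⟨b, hb⟩
    exact ⟨a + b, chain A hA0 ha hb⟩
  have hRsymm : ∀ {i j}, R i j → R j i := fun {i j} h => hnotrans i j h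
  apply hdet
  apply lemZ A hA0 pv hpv hinv (fun i j => ¬ R i j)
  · intro i j h hc; exact h (hRsymm hc)
  · intro i h; exact h (hRrefl i)
  · exact ⟨i0, j0, fun h => absurd h.choose_spec (not_lt.2 (hij0 h.choose))⟩
  · intro i j k l hik hjl
    have hik' : R i k := ⟨1, by simpa using hik⟩
    have hjl' : R j l := ⟨1, by simpa using hjl⟩
    constructor
    · intro h hkl; exact h (hRtrans hik' (hRtrans hkl (hRsymm hjl')))
    · intro h hij; exact h (hRtrans (hRsymm hik') (hRtrans hij hjl'))

lemma exists_return (A : Matrix (Fin n) (Fin n) ℝ)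
    (hA0 : ∀ i j, 0 ≤ A i j) (hA1 : ∀ i, ∑ j, A i j = 1)
    (hirred : ∀ i j, ∃ m, 0 < (A ^ m) i j) (i : Fin n) :
    ∃ s, 0 < s ∧ 0 < (A ^ s) i i := by
  have hex : ∃ j, 0 < A i j := by
    by_contra hc
    push_neg at hc
    have : ∑ j, A i j = 0 := by
      apply Finset.sum_eq_zero
      intro j _
      exact le_antisymm (hc j) (hA0 i j)
    rw [hA1 i] at this
    norm_num at this
  obtain ⟨j, hj⟩ := hex
  obtain ⟨m, hm⟩ := hirred j i
  refine ⟨1 + m, by omega, ?_⟩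
  exact chain A hA0 (a := 1) (by simpa using hj) hm

lemma aper_of_det (hn : 0 < n) (A : Matrix (Fin n) (Fin n) ℝ)
    (hA0 : ∀ i j, 0 ≤ A i j) (hA1 : ∀ i, ∑ j, A i j = 1)
    (pv : Fin n → ℝ) (hpv : ∀ i, 0 < pv i) (hinv : pv ᵥ* A = pv)
    (hirred : ∀ i j, ∃ m, 0 < (A ^ m) i j)
    (hdet : (1 - zeonSq A).det ≠ 0) :
    ∀ d : ℕ, (∀ m, 0 < m → (∃ i, 0 < (A ^ m) i i) → d ∣ m) → d = 1 := by
  classical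
  intro d hd
  by_contra hd1
  set i0 : Fin n := ⟨0, hn⟩
  obtain ⟨s, hs0, hs⟩ := exists_return A hA0 hA1 hirred i0
  have hds : d ∣ s := hd s hs0 ⟨i0, hs⟩
  have hd0 : d ≠ 0 := by
    rintro rfl
    have := Nat.eq_zero_of_zero_dvd hds
    omega
  have hd2 : 2 ≤ d := by omega
  have hcong : ∀ (i : Fin n) (a b : ℕ),
      0 < (A ^ a) i0 i → 0 < (A ^ b) i0 i → a ≡ b [MOD d] := by
    intro i a b ha hb
    obtain ⟨c, hc⟩ := hirred i i0
    have h1 : d ∣ a + c := by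
      rcases Nat.eq_zero_or_pos (a + c) with h | h
      · simp [h]
      · exact hd _ h ⟨i0, chain A hA0 ha hc⟩
    have h2 : d ∣ b + c := by
      rcases Nat.eq_zero_or_pos (b + c) with h | h
      · simp [h]
      · exact hd _ h ⟨i0, chain A hA0 hb hc⟩
    have h3 : a + c ≡ b + c [MOD d] :=
      (Nat.modEq_zero_iff_dvd.mpr h1).trans (Nat.modEq_zero_iff_dvd.mpr h2).symm
    exact Nat.ModEq.add_right_cancel' c h3
  set Q : Fin n → Fin n → Prop := fun i j =>
    ∃ a b, 0 < (A ^ a) i0 i ∧ 0 < (A ^ b) i0 j ∧ ¬ a ≡ b [MOD d] with hQ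
  apply hdet
  apply lemZ A hA0 pv hpv hinv Q
  · rintro i j ⟨a, b, ha, hb, hab⟩
    exact ⟨b, a, hb, ha, fun h => hab h.symm⟩
  · rintro i ⟨a, b, ha, hb, hab⟩
    exact hab (hcong i a b ha hb)
  · have hex : ∃ j, 0 < A i0 j := by
      by_contra hc
      push_neg at hc
      have h0 : ∑ j, A i0 j = 0 :=
        Finset.sum_eq_zero fun j _ => le_antisymm (hc j) (hA0 i0 j)
      rw [hA1 i0] at h0
      norm_num at h0
    obtain ⟨j, hj⟩ := hex
    refine ⟨i0, j, 0, 1, by simp [Matrix.one_apply], by simpa using hj, ?_⟩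
    intro h
    have h' : 0 % d = 1 % d := h
    rw [Nat.zero_mod, Nat.mod_eq_of_lt (by omega)] at h'
    exact one_ne_zero h'.symm
  · intro i j k l hik hjl
    have hik1 : 0 < (A ^ 1) i k := by simpa using hik
    have hjl1 : 0 < (A ^ 1) j l := by simpa using hjl
    constructor
    · rintro ⟨a, b, ha, hb, hab⟩
      exact ⟨a + 1, b + 1, chain A hA0 ha hik1, chain A hA0 hb hjl1,
        fun h => hab (Nat.ModEq.add_right_cancel' 1 h)⟩
    · rintro ⟨a', b', ha', hb', hab'⟩
      obtain ⟨a, ha⟩ := hirred i0 i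
      obtain ⟨b, hb⟩ := hirred i0 j
      refine ⟨a, b, ha, hb, ?_⟩
      intro hab
      apply hab'
      have h1 : a + 1 ≡ a' [MOD d] := hcong k (a + 1) a' (chain A hA0 ha hik1) ha'
      have h2 : b + 1 ≡ b' [MOD d] := hcong l (b + 1) b' (chain A hA0 hb hjl1) hb'
      exact h1.symm.trans ((hab.add_right 1).trans h2)
end Stmt18Aux
namespace Stmt18Aux

/-- A set of positive naturals closed under addition whose only common divisor is 1
contains all sufficiently large naturals. -/
lemma semigroup_lemma (S : Set ℕ) (hpos : ∀ s ∈ S, 0 < s)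
    (hadd : ∀ s ∈ S, ∀ t ∈ S, s + t ∈ S) (hne : S.Nonempty)
    (hgcd : ∀ d : ℕ, (∀ s ∈ S, d ∣ s) → d = 1) :
    ∃ M, ∀ m, M ≤ m → m ∈ S := by
  classical
  -- S ∪ {0}
  set S0 : Set ℕ := S ∪ {0} with hS0
  have hS0add : ∀ s ∈ S0, ∀ t ∈ S0, s + t ∈ S0 := by
    rintro s (hs | hs) t (ht | ht)
    · exact Or.inl (hadd s hs t ht)
    · simp only [Set.mem_singleton_iff] at ht; subst ht; exact Or.inl hs
    · simp only [Set.mem_singleton_iff] at hs; subst hs; rw [Nat.zero_add]; exact Or.inl ht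
    · simp only [Set.mem_singleton_iff] at hs ht; subst hs; subst ht; exact Or.inr rfl
  have hsmul0 : ∀ (k : ℕ), ∀ s ∈ S0, k * s ∈ S0 := by
    intro k
    induction k with
    | zero => intro s _; simp [hS0]
    | succ k ih =>
      intro s hs
      have := hS0add (k * s) (ih s hs) s hs
      simpa [Nat.succ_mul] using this
  have hSadd0 : ∀ s ∈ S, ∀ t ∈ S0, s + t ∈ S := by
    rintro s hs t (ht | ht)
    · exact hadd s hs t ht
    · simp only [Set.mem_singleton_iff] at ht; subst ht; simpa using hs
  set D : Set ℕ := {k | 0 < k ∧ ∃ u ∈ S0, ∃ v ∈ S0, u = v + k} with hD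
  obtain ⟨a, ha⟩ := hne
  have hDne : a ∈ D := ⟨hpos a ha, a, Or.inl ha, 0, Or.inr rfl, by simp⟩
  have hdm := Nat.sInf_mem (⟨a, hDne⟩ : D.Nonempty)
  set d := sInf D with hd
  obtain ⟨hdpos, u, hu, v, hv, huv⟩ := hdm
  have hdvd : ∀ s ∈ S, d ∣ s := by
    intro s hs
    by_contra hnd
    have hr : s % d ≠ 0 := fun h => hnd (Nat.dvd_of_mod_eq_zero h)
    set q := s / d with hq
    set r := s % d with hrdef
    have hrd : r < d := Nat.mod_lt s hdpos
    have hrD : r ∈ D := by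
      refine ⟨Nat.pos_of_ne_zero hr, s + q * v, Or.inl (hSadd0 s hs _ (hsmul0 q v hv)),
        q * u, hsmul0 q u hu, ?_⟩
      have heq : s = q * d + r := by
        rw [hq, hrdef, Nat.mul_comm]
        exact (Nat.div_add_mod s d).symm
      calc s + q * v = q * d + r + q * v := by rw [← heq]
        _ = q * (v + d) + r := by ring
        _ = q * u + r := by rw [← huv]
    have hle := Nat.sInf_le hrD
    rw [← hd] at hle
    omega
  have hd1 : d = 1 := hgcd d hdvd
  rw [hd1] at huv
  -- u = v + 1, u v ∈ S0
  have huS : u ∈ S := by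
    rcases hu with h | h
    · exact h
    · simp only [Set.mem_singleton_iff] at h; omega
  rcases hv with hvS | hv0
  · -- v ∈ S, u = v + 1 ∈ S
    have hvpos : 0 < v := hpos v hvS
    refine ⟨v * v, ?_⟩
    intro m hm
    have hmv : v ≤ m / v := Nat.le_div_iff_mul_le hvpos |>.mpr (by nlinarith)
    set q := m / v with hqv
    set r := m % v with hrv
    have hrlt : r < v := Nat.mod_lt m hvpos
    have h1 : m = q * v + r := by
      rw [hqv, hrv, Nat.mul_comm]
      exact (Nat.div_add_mod m v).symm
    have h2 : r ≤ q := by omega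
    obtain ⟨q', hq'⟩ : ∃ q', q = q' + r := ⟨q - r, by omega⟩
    have hq'pos : 0 < q' := by omega
    have hrepr : m = q' * v + r * u := by
      rw [huv, h1, hq']; ring
    rw [hrepr]
    have hmem : q' * v ∈ S := by
      have := hsmul0 q' v (Or.inl hvS)
      rcases this with h | h
      · exact h
      · simp only [Set.mem_singleton_iff] at h
        have := Nat.mul_ne_zero (by omega : q' ≠ 0) (by omega : v ≠ 0)
        omega
    exact hSadd0 _ hmem _ (hsmul0 r u (Or.inl huS))
  · -- v = 0, u = 1 ∈ S
    simp only [Set.mem_singleton_iff] at hv0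
    subst hv0
    simp only [Nat.zero_add] at huv
    refine ⟨1, ?_⟩
    intro m hm
    have := hsmul0 m u (Or.inl huS)
    rcases this with h | h
    · rwa [huv, Nat.mul_one] at h
    · simp only [Set.mem_singleton_iff] at h
      rw [huv, Nat.mul_one] at h
      omega

variable {n : ℕ}

lemma primitive (hn : 0 < n) (A : Matrix (Fin n) (Fin n) ℝ)
    (hA0 : ∀ i j, 0 ≤ A i j) (hA1 : ∀ i, ∑ j, A i j = 1)
    (hirred : ∀ i j, ∃ m, 0 < (A ^ m) i j)
    (haper : ∀ d : ℕ, (∀ m, 0 < m → (∃ i, 0 < (A ^ m) i i) → d ∣ m) → d = 1) :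
    ∃ N, 0 < N ∧ ∀ i j, 0 < (A ^ N) i j := by
  classical
  set i0 : Fin n := ⟨0, hn⟩
  set S : Set ℕ := {m | 0 < m ∧ 0 < (A ^ m) i0 i0} with hS
  obtain ⟨s0, hs00, hs0⟩ := exists_return A hA0 hA1 hirred i0
  have hSne : S.Nonempty := ⟨s0, hs00, hs0⟩
  have hSadd : ∀ s ∈ S, ∀ t ∈ S, s + t ∈ S := by
    rintro s ⟨hs1, hs2⟩ t ⟨ht1, ht2⟩
    exact ⟨by omega, chain A hA0 hs2 ht2⟩
  have hSgcd : ∀ d : ℕ, (∀ s ∈ S, d ∣ s) → d = 1 := by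
    intro d hdvd
    apply haper
    intro m hm ⟨i, hi⟩
    obtain ⟨p, hp⟩ := hirred i0 i
    obtain ⟨q, hq⟩ := hirred i i0
    have h1 : p + m + q ∈ S :=
      ⟨by omega, chain A hA0 (chain A hA0 hp hi) hq⟩
    have hd1 : d ∣ p + m + q := hdvd _ h1
    rcases Nat.eq_zero_or_pos (p + q) with h | h
    · have : p = 0 ∧ q = 0 := by omega
      obtain ⟨rfl, rfl⟩ := this
      simpa using hd1
    · have h2 : p + q ∈ S := ⟨h, chain A hA0 hp hq⟩
      have hd2 : d ∣ p + q := hdvd _ h2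
      have : p + m + q = m + (p + q) := by ring
      rw [this] at hd1
      exact (Nat.dvd_add_right hd2).mp (by rwa [Nat.add_comm] at hd1)
  obtain ⟨M, hM⟩ := semigroup_lemma S (fun s hs => hs.1) hSadd hSne hSgcd
  -- choose connection times
  set p : Fin n → ℕ := fun i => (hirred i i0).choose with hp
  set q : Fin n → ℕ := fun j => (hirred i0 j).choose with hq
  set P : ℕ := Finset.univ.sup p with hP
  set Qm : ℕ := Finset.univ.sup q with hQm
  refine ⟨M + P + Qm + s0, by omega, ?_⟩
  intro i j
  have hpi : p i ≤ P := Finset.le_sup (Finset.mem_univ i)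
  have hqj : q j ≤ Qm := Finset.le_sup (Finset.mem_univ j)
  set t : ℕ := (P - p i) + (Qm - q j) + M + s0 with ht
  have htM : M ≤ t := by omega
  have htS : t ∈ S := hM t htM
  have hsplit : M + P + Qm + s0 = p i + t + q j := by omega
  rw [hsplit]
  exact chain A hA0 (chain A hA0 (hirred i i0).choose_spec htS.2) (hirred i0 j).choose_spec

end Stmt18Aux
namespace Stmt18Aux
variable {n : ℕ}

lemma tv_mono (P : Matrix (Fin n) (Fin n) ℝ) (hP0 : ∀ i j, 0 ≤ P i j)
    (hP1 : ∀ i, ∑ j, P i j = 1) (w : Fin n → ℝ) :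
    ∑ x, |∑ y, w y * P y x| ≤ ∑ y, |w y| := by
  calc ∑ x, |∑ y, w y * P y x| ≤ ∑ x, ∑ y, |w y| * P y x := by
        apply Finset.sum_le_sum; intro x _
        calc |∑ y, w y * P y x| ≤ ∑ y, |w y * P y x| := Finset.abs_sum_le_sum_abs _ _
          _ = ∑ y, |w y| * P y x := by
              apply Finset.sum_congr rfl; intro y _
              rw [abs_mul, abs_of_nonneg (hP0 y x)]
    _ = ∑ y, |w y| * ∑ x, P y x := by rw [Finset.sum_comm]; simp [Finset.mul_sum]
    _ = ∑ y, |w y| := by simp [hP1]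

lemma tv_contract (P : Matrix (Fin n) (Fin n) ℝ)
    (hP1 : ∀ i, ∑ j, P i j = 1) (δ : ℝ) (hδ : ∀ i j, δ ≤ P i j)
    (w : Fin n → ℝ) (hw : ∑ y, w y = 0) :
    ∑ x, |∑ y, w y * P y x| ≤ (1 - n * δ) * ∑ y, |w y| := by
  have key : ∀ x, ∑ y, w y * P y x = ∑ y, w y * (P y x - δ) := by
    intro x
    simp [mul_sub, Finset.sum_sub_distrib, ← Finset.sum_mul, hw]
  calc ∑ x, |∑ y, w y * P y x| = ∑ x, |∑ y, w y * (P y x - δ)| := by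
        apply Finset.sum_congr rfl; intro x _; rw [key]
    _ ≤ ∑ x, ∑ y, |w y| * (P y x - δ) := by
        apply Finset.sum_le_sum; intro x _
        calc |∑ y, w y * (P y x - δ)| ≤ ∑ y, |w y * (P y x - δ)| :=
              Finset.abs_sum_le_sum_abs _ _
          _ = ∑ y, |w y| * (P y x - δ) := by
              apply Finset.sum_congr rfl; intro y _
              rw [abs_mul, abs_of_nonneg (sub_nonneg.2 (hδ y x))]
    _ = ∑ y, |w y| * ((∑ x, P y x) - n * δ) := by
        rw [Finset.sum_comm]
        apply Finset.sum_congr rfl; intro y _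
        rw [← Finset.mul_sum]
        congr 1
        rw [Finset.sum_sub_distrib, Finset.sum_const, Finset.card_univ]
        simp [nsmul_eq_mul]
    _ = (1 - n * δ) * ∑ y, |w y| := by
        rw [Finset.mul_sum]
        apply Finset.sum_congr rfl; intro y _
        rw [hP1 y]; ring

lemma converge (hn : 0 < n) (A : Matrix (Fin n) (Fin n) ℝ)
    (hA0 : ∀ i j, 0 ≤ A i j) (hA1 : ∀ i, ∑ j, A i j = 1)
    (pv : Fin n → ℝ) (hpv1 : ∑ i, pv i = 1) (hinv : pv ᵥ* A = pv)
    (N : ℕ) (hN : 0 < N) (hposN : ∀ i j, 0 < (A ^ N) i j) :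
    Filter.Tendsto (fun k => A ^ k) Filter.atTop
      (nhds (Matrix.vecMulVec (fun _ => 1) pv)) := by
  classical
  have i0 : Fin n := ⟨0, hn⟩
  -- minimum entry of A^N
  obtain ⟨p0, _, hp0⟩ := Finset.exists_min_image (Finset.univ : Finset (Fin n × Fin n))
    (fun p => (A ^ N) p.1 p.2) ⟨(i0, i0), Finset.mem_univ _⟩
  set δ : ℝ := (A ^ N) p0.1 p0.2 with hδdef
  have hδpos : 0 < δ := hposN p0.1 p0.2
  have hδle : ∀ i j, δ ≤ (A ^ N) i j := fun i j => hp0 (i, j) (Finset.mem_univ _)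
  set c : ℝ := 1 - n * δ with hc
  have hnδ : (n : ℝ) * δ ≤ 1 := by
    have h1 : ∑ x : Fin n, δ ≤ ∑ x, (A ^ N) i0 x :=
      Finset.sum_le_sum fun x _ => hδle i0 x
    rw [pow_rowsum A hA1 N i0] at h1
    simpa [Finset.sum_const, Finset.card_univ, nsmul_eq_mul] using h1
  have hc0 : 0 ≤ c := by rw [hc]; linarith
  have hc1 : c < 1 := by
    rw [hc]
    have : (0:ℝ) < n * δ := mul_pos (by exact_mod_cast hn) hδpos
    linarith
  have hinvpow : ∀ k, pv ᵥ* (A ^ k) = pv := by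
    intro k
    induction k with
    | zero => simp
    | succ k ih => rw [pow_succ, ← Matrix.vecMul_vecMul, ih, hinv]
  have hvmpow : ∀ (k : ℕ) (x : Fin n), ∑ y, pv y * (A ^ k) y x = pv x := by
    intro k x
    have := congrFun (hinvpow k) x
    simpa [Matrix.vecMul, dotProduct] using this
  refine tendsto_pi_nhds.2 ?_
  intro i
  rw [tendsto_pi_nhds]
  intro x
  set W : ℕ → Fin n → ℝ := fun m y => (A ^ m) i y - pv y with hW
  set f : ℕ → ℝ := fun m => ∑ y, |W m y| with hf
  have hWrec : ∀ (k m : ℕ) (z : Fin n), W (m + k) z = ∑ y, W m y * (A ^ k) y z := by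
    intro k m z
    simp only [hW]
    rw [pow_add, Matrix.mul_apply]
    simp only [sub_mul, Finset.sum_sub_distrib]
    rw [hvmpow k z]
  have hsum0 : ∀ m, ∑ y, W m y = 0 := by
    intro m
    simp only [hW, Finset.sum_sub_distrib]
    rw [pow_rowsum A hA1 m i, hpv1, sub_self]
  have hmono : ∀ m, f (m + 1) ≤ f m := by
    intro m
    have : ∀ z, W (m + 1) z = ∑ y, W m y * A y z := by
      intro z; simpa using hWrec 1 m z
    simp only [hf]
    calc ∑ y, |W (m+1) y| = ∑ z, |∑ y, W m y * A y z| := by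
          apply Finset.sum_congr rfl; intro z _; rw [this z]
      _ ≤ ∑ y, |W m y| := tv_mono A hA0 hA1 (W m)
  have hmono' : ∀ m m', m ≤ m' → f m' ≤ f m := by
    intro m m' h
    induction m', h using Nat.le_induction with
    | base => exact le_refl _
    | succ k hk ih => exact le_trans (hmono k) ih
  have hcontr : ∀ m, f (m + N) ≤ c * f m := by
    intro m
    simp only [hf, hc]
    calc ∑ y, |W (m + N) y| = ∑ z, |∑ y, W m y * (A ^ N) y z| := by
          apply Finset.sum_congr rfl; intro z _; rw [hWrec N m z]
      _ ≤ (1 - n * δ) * ∑ y, |W m y| :=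
          tv_contract (A ^ N) (pow_rowsum A hA1 N) δ hδle (W m) (hsum0 m)
  have hiter : ∀ k, f (k * N) ≤ c ^ k * f 0 := by
    intro k
    induction k with
    | zero => simp
    | succ k ih =>
      have h1 : f ((k + 1) * N) ≤ c * f (k * N) := by
        have : (k + 1) * N = k * N + N := by ring
        rw [this]
        exact hcontr (k * N)
      calc f ((k+1) * N) ≤ c * f (k * N) := h1
        _ ≤ c * (c ^ k * f 0) := mul_le_mul_of_nonneg_left ih hc0
        _ = c ^ (k+1) * f 0 := by ring
  have hbound : ∀ m, |W m x| ≤ c ^ (m / N) * f 0 := by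
    intro m
    have h1 : |W m x| ≤ f m :=
      Finset.single_le_sum (f := fun y => |W m y|) (fun y _ => abs_nonneg _)
        (Finset.mem_univ x)
    have h2 : f m ≤ f (m / N * N) := hmono' _ _ (Nat.div_mul_le_self m N)
    exact le_trans h1 (le_trans h2 (hiter (m / N)))
  have hzero : Filter.Tendsto (fun m => c ^ (m / N) * f 0) Filter.atTop (nhds 0) := by
    have h1 : Filter.Tendsto (fun k : ℕ => c ^ k) Filter.atTop (nhds 0) :=
      tendsto_pow_atTop_nhds_zero_of_lt_one hc0 hc1
    have h2 : Filter.Tendsto (fun m : ℕ => m / N) Filter.atTop Filter.atTop := by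
      apply Filter.tendsto_atTop_atTop.2
      intro b
      exact ⟨b * N, fun m hm => (Nat.le_div_iff_mul_le hN).mpr hm⟩
    have := (h1.comp h2).mul_const (f 0)
    simpa using this
  have hWz : Filter.Tendsto (fun m => W m x) Filter.atTop (nhds 0) :=
    squeeze_zero_norm hbound hzero
  have := hWz.add_const (pv x)
  simp only [hW, zero_add, sub_add_cancel] at this
  have hgoal : Matrix.vecMulVec (fun _ : Fin n => (1:ℝ)) pv i x = pv x := by
    simp [Matrix.vecMulVec_apply]
  rw [hgoal]
  exact this

end Stmt18Aux

theorem stmt18 {n : ℕ} (hn : 0 < n) (A : Matrix (Fin n) (Fin n) ℝ)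
    (hA0 : ∀ i j, 0 ≤ A i j) (hA1 : ∀ i, ∑ j, A i j = 1)
    (pv : Fin n → ℝ) (hpv : ∀ i, 0 < pv i) (hpv1 : ∑ i, pv i = 1)
    (hinv : pv ᵥ* A = pv)
    (hnotrans : ∀ i j, (∃ m, 0 < (A ^ m) i j) → ∃ m, 0 < (A ^ m) j i)
    (hdet : (1 - zeonSq A).det ≠ 0) :
    (∀ i j, ∃ m, 0 < (A ^ m) i j) ∧
      (∀ d : ℕ, (∀ m, 0 < m → (∃ i, 0 < (A ^ m) i i) → d ∣ m) → d = 1) ∧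
      Filter.Tendsto (fun k => A ^ k) Filter.atTop
        (nhds (Matrix.vecMulVec (fun _ => 1) pv)) := by
  have hirred := Stmt18Aux.irred_of_det hn A hA0 pv hpv hinv hnotrans hdet
  have haper := Stmt18Aux.aper_of_det hn A hA0 hA1 pv hpv hinv hirred hdet
  obtain ⟨N, hN, hposN⟩ := Stmt18Aux.primitive hn A hA0 hA1 hirred haper
  exact ⟨hirred, haper, Stmt18Aux.converge hn A hA0 hA1 pv hpv1 hinv N hN hposN⟩
end
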